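/- arXiv:2301.12208 — 7 statements merged into one kernel-verified Lean document; each statement's English description precedes it below -/
import Mathlib

section
/- Let H be a Hilbert space and T a bounded linear operator on H. If T commutes with a sequence (U_j) of unitary operators on H that converges weakly to 0, then the spectrum of T equals its essential spectrum. -/
open Filter Topology
open scoped InnerProductSpace

/-- An operator is Fredholm iff it is invertible modulo compact operators (Atkinson). -/
def IsFredholm {H : Type*} [NormedAddCommGroup H] [NormedSpace ℂ H]
    (T : H →L[ℂ] H) : Prop :=
  ∃ S : H →L[ℂ] H, IsCompactOperator ⇑(S ∘L T - 1) ∧ IsCompactOperator ⇑(T ∘L S - 1)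

/-- Core compactness argument: if each `U j x` is a fixed point of a compact operator `g`,
and the `U j` are unitaries converging weakly to zero, then `x = 0`. -/
lemma core_aux {H : Type*} [NormedAddCommGroup H] [InnerProductSpace ℂ H]
    (U : ℕ → (H ≃ₗᵢ[ℂ] H))
    (hweak : ∀ x y : H, Tendsto (fun j => (inner ℂ (U j x) y : ℂ)) atTop (𝓝 0))
    (g : H →L[ℂ] H) (hg : IsCompactOperator ⇑g) (x : H)
    (hx : ∀ j, U j x = g (U j x)) : x = 0 := by
  set v : ℕ → H := fun j => U j x with hv
  have hnorm : ∀ j, ‖v j‖ = ‖x‖ := fun j => (U j).norm_map x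
  have hgc : IsCompactOperator ⇑(g : H →ₗ[ℂ] H) := hg
  have hcomp : IsCompact (closure (⇑(g : H →ₗ[ℂ] H) '' Metric.closedBall 0 ‖x‖)) :=
    hgc.isCompact_closure_image_closedBall ‖x‖
  have hmem : ∀ j, v j ∈ closure (⇑(g : H →ₗ[ℂ] H) '' Metric.closedBall 0 ‖x‖) := by
    intro j
    refine subset_closure ⟨v j, ?_, (hx j).symm⟩
    simp [Metric.mem_closedBall, dist_eq_norm, hnorm j]
  obtain ⟨w, -, φ, hφ, hlim⟩ := hcomp.tendsto_subseq hmem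
  have hw : w = 0 := by
    have h1 : Tendsto (fun k => (inner ℂ (v (φ k)) w : ℂ)) atTop (𝓝 (inner ℂ w w)) :=
      hlim.inner tendsto_const_nhds
    have h2 : Tendsto (fun k => (inner ℂ (v (φ k)) w : ℂ)) atTop (𝓝 0) :=
      (hweak x w).comp hφ.tendsto_atTop
    exact inner_self_eq_zero.mp (tendsto_nhds_unique h1 h2)
  have hxn : Tendsto (fun k => ‖v (φ k)‖) atTop (𝓝 ‖w‖) := hlim.norm
  have h3 : Tendsto (fun _ : ℕ => ‖x‖) atTop (𝓝 ‖w‖) := by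
    simpa [hnorm] using hxn
  have h4 : ‖x‖ = ‖w‖ := tendsto_nhds_unique tendsto_const_nhds h3
  rw [hw, norm_zero] at h4
  exact norm_eq_zero.mp h4

/-- If `S ∘ A = 1 + K` with `K` compact and `A` injective, then `A` is bounded below. -/
lemma bounded_below_aux {H : Type*} [NormedAddCommGroup H] [InnerProductSpace ℂ H]
    (A S K : H →L[ℂ] H) (hK : IsCompactOperator ⇑K)
    (hSA : ∀ w : H, S (A w) = w + K w)
    (hinj : ∀ w : H, A w = 0 → w = 0) :
    ∃ c : ℝ, 0 < c ∧ ∀ w : H, c * ‖w‖ ≤ ‖A w‖ := by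
  by_contra h
  push_neg at h
  have key : ∀ n : ℕ, ∃ u : H, ‖u‖ = 1 ∧ ‖A u‖ < 1 / (n + 1) := by
    intro n
    obtain ⟨w, hw⟩ := h (1 / (n + 1)) (by positivity)
    have hw0 : w ≠ 0 := by
      intro h0
      rw [h0] at hw; simp at hw
    have hnw : ‖((‖w‖ : ℂ))⁻¹‖ = ‖w‖⁻¹ := by
      rw [norm_inv, Complex.norm_real, Real.norm_of_nonneg (norm_nonneg w)]
    refine ⟨(‖w‖ : ℂ)⁻¹ • w, ?_, ?_⟩
    · rw [norm_smul, hnw, inv_mul_cancel₀ (norm_ne_zero_iff.mpr hw0)]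
    · rw [map_smul, norm_smul, hnw]
      have hwpos : (0:ℝ) < ‖w‖ := norm_pos_iff.mpr hw0
      calc ‖w‖⁻¹ * ‖A w‖ < ‖w‖⁻¹ * (1 / (n + 1) * ‖w‖) :=
            mul_lt_mul_of_pos_left hw (by positivity)
        _ = 1 / (n + 1) := by field_simp
  choose u hu1 hu2 using key
  have hAu : Tendsto (fun n => A (u n)) atTop (𝓝 0) := by
    rw [tendsto_zero_iff_norm_tendsto_zero]
    refine squeeze_zero (fun n => norm_nonneg _) (fun n => le_of_lt (hu2 n)) ?_
    exact tendsto_one_div_add_atTop_nhds_zero_nat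
  have hKc : IsCompactOperator ⇑(K : H →ₗ[ℂ] H) := hK
  have hcomp : IsCompact (closure (⇑(K : H →ₗ[ℂ] H) '' Metric.closedBall 0 1)) :=
    hKc.isCompact_closure_image_closedBall 1
  have hmem : ∀ n, K (u n) ∈ closure (⇑(K : H →ₗ[ℂ] H) '' Metric.closedBall 0 1) := by
    intro n
    refine subset_closure ⟨u n, ?_, rfl⟩
    simp [Metric.mem_closedBall, dist_eq_norm, hu1 n]
  obtain ⟨w, -, φ, hφ, hlim⟩ := hcomp.tendsto_subseq hmem
  have hulim : Tendsto (fun k => u (φ k)) atTop (𝓝 (-w)) := by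
    have h1 : ∀ k, u (φ k) = S (A (u (φ k))) - K (u (φ k)) := by
      intro k; rw [hSA (u (φ k))]; abel
    have h2 : Tendsto (fun k => S (A (u (φ k))) - K (u (φ k))) atTop (𝓝 (0 - w)) := by
      refine Tendsto.sub ?_ hlim
      have := (S.continuous.tendsto 0).comp (hAu.comp hφ.tendsto_atTop)
      rwa [map_zero] at this
    rw [zero_sub] at h2
    exact h2.congr (fun k => (h1 k).symm)
  have hwnorm : ‖(-w : H)‖ = 1 := by
    have h1 : Tendsto (fun k => ‖u (φ k)‖) atTop (𝓝 ‖(-w : H)‖) := hulim.norm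
    have h2 : Tendsto (fun k => ‖u (φ k)‖) atTop (𝓝 1) := by
      simp only [hu1]
      exact tendsto_const_nhds
    exact tendsto_nhds_unique h1 h2
  have hAw : A (-w) = 0 := by
    have h1 : Tendsto (fun k => A (u (φ k))) atTop (𝓝 (A (-w))) :=
      (A.continuous.tendsto _).comp hulim
    have h2 : Tendsto (fun k => A (u (φ k))) atTop (𝓝 0) := hAu.comp hφ.tendsto_atTop
    exact tendsto_nhds_unique h1 h2
  have := hinj _ hAw
  rw [this, norm_zero] at hwnorm
  exact zero_ne_one hwnorm

/-- if `T` commutes with a sequence of unitaries converging weakly to `0`,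
then the spectrum of `T` equals its essential spectrum. -/
theorem stmt_1 {H : Type*} [NormedAddCommGroup H] [InnerProductSpace ℂ H] [CompleteSpace H]
    (T : H →L[ℂ] H) (U : ℕ → (H ≃ₗᵢ[ℂ] H))
    (hcomm : ∀ (j : ℕ) (x : H), T (U j x) = U j (T x))
    (hweak : ∀ x y : H, Tendsto (fun j => (inner ℂ (U j x) y : ℂ)) atTop (𝓝 0)) :
    spectrum ℂ T = {l : ℂ | ¬ IsFredholm (T - l • (1 : H →L[ℂ] H))} := by
  ext l
  simp only [Set.mem_setOf_eq]
  set A : H →L[ℂ] H := T - l • 1 with hA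
  have hAapp : ∀ x : H, A x = T x - l • x := by
    intro x; simp [hA]
  have hAcomm : ∀ (j : ℕ) (x : H), A (U j x) = U j (A x) := by
    intro j x
    rw [hAapp, hAapp, hcomm, map_sub, LinearIsometryEquiv.map_smul]
  have hspec : l ∈ spectrum ℂ T ↔ ¬ IsUnit A := by
    rw [spectrum.mem_iff]
    constructor
    · intro h hu
      exact h (by simpa [hA, Algebra.algebraMap_eq_smul_one, neg_sub] using hu.neg)
    · intro h hu
      exact h (by simpa [hA, Algebra.algebraMap_eq_smul_one, neg_sub] using hu.neg)
  rw [hspec]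
  constructor
  · -- not unit → not Fredholm
    intro hnu hF
    apply hnu
    obtain ⟨S, hK, hK'⟩ := hF
    set K : H →L[ℂ] H := S ∘L A - 1 with hKdef
    set K' : H →L[ℂ] H := A ∘L S - 1 with hK'def
    have hSA : ∀ w : H, S (A w) = w + K w := by
      intro w; simp [hKdef]
    have hAS : ∀ w : H, A (S w) = w + K' w := by
      intro w; simp [hK'def]
    -- injectivity
    have hinj : ∀ w : H, A w = 0 → w = 0 := by
      intro w hw
      refine core_aux U hweak (-K) (by simpa using hK.neg) w (fun j => ?_)
      have h1 : A (U j w) = 0 := by rw [hAcomm, hw, map_zero]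
      have h2 := hSA (U j w)
      rw [h1, map_zero] at h2
      have h3 : U j w = -(K (U j w)) := eq_neg_of_add_eq_zero_left h2.symm
      simpa using h3
    -- bounded below
    obtain ⟨c, hc, hbdd⟩ := bounded_below_aux A S K hK hSA hinj
    -- closed range
    have hanti : AntilipschitzWith (Real.toNNReal c)⁻¹ ⇑A :=
      ContinuousLinearMap.antilipschitz_of_bound A (fun x => by
        rw [NNReal.coe_inv, Real.coe_toNNReal c hc.le, ← div_eq_inv_mul, le_div_iff₀ (by exact_mod_cast hc)]
        calc ‖x‖ * c = c * ‖x‖ := mul_comm _ _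
          _ ≤ ‖A x‖ := hbdd x)
    have hclosed : IsClosed (Set.range ⇑A) := hanti.isClosed_range A.uniformContinuous
    have hclosedR : IsClosed ((LinearMap.range (A : H →ₗ[ℂ] H) : Submodule ℂ H) : Set H) := by
      simpa [LinearMap.coe_range] using hclosed
    haveI : CompleteSpace (LinearMap.range (A : H →ₗ[ℂ] H) : Submodule ℂ H) := hclosedR.completeSpace_coe
    -- surjectivity via orthogonal complement
    set N : Submodule ℂ H := (LinearMap.range (A : H →ₗ[ℂ] H))ᗮ with hN
    haveI : CompleteSpace N := (Submodule.isClosed_orthogonal _).completeSpace_coe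
    have hNbot : N = ⊥ := by
      rw [Submodule.eq_bot_iff]
      intro y hy
      have hUy : ∀ j, U j y ∈ N := by
        intro j
        rw [hN, Submodule.mem_orthogonal]
        rintro u ⟨z, rfl⟩
        have hz : A z = U j (A ((U j).symm z)) := by
          rw [← hAcomm, (U j).apply_symm_apply]
        rw [ContinuousLinearMap.coe_coe, hz, (U j).inner_map_map]
        exact (Submodule.mem_orthogonal _ y).mp hy (A ((U j).symm z)) ⟨(U j).symm z, rfl⟩
      set g : H →L[ℂ] H := -((N.subtypeL ∘L N.orthogonalProjectionOnto) ∘L K') with hg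
      have hgc : IsCompactOperator ⇑g := by
        have h1 : IsCompactOperator
            (⇑(N.subtypeL ∘L N.orthogonalProjectionOnto) ∘ ⇑K') :=
          hK'.clm_comp (N.subtypeL ∘L N.orthogonalProjectionOnto)
        have h2 : IsCompactOperator ⇑((N.subtypeL ∘L N.orthogonalProjectionOnto) ∘L K') := by
          simpa [ContinuousLinearMap.coe_comp'] using h1
        simpa [hg] using h2.neg
      refine core_aux U hweak g hgc y (fun j => ?_)
      set w : H := U j y with hwdef
      have e1 : w = A (S w) - K' w := by
        rw [hAS w]; abel
      have e2 : (N.orthogonalProjectionOnto w : H) = w :=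
        Submodule.starProjection_eq_self_iff.mpr (hUy j)
      have e3 : N.orthogonalProjectionOnto (A (S w)) = 0 :=
        Submodule.orthogonalProjectionOnto_apply_of_mem_orthogonal
          ((LinearMap.range (A : H →ₗ[ℂ] H)).le_orthogonal_orthogonal ⟨S w, rfl⟩)
      have e4 : (N.orthogonalProjectionOnto (A (S w) - K' w) : H) = w := by
        rw [← e1]; exact e2
      rw [map_sub, e3, zero_sub] at e4
      have e4' : -((N.orthogonalProjectionOnto (K' w) : H)) = w := by
        push_cast at e4
        exact e4
      have e5 : g w = w := by
        rw [hg]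
        simp only [ContinuousLinearMap.neg_apply, ContinuousLinearMap.comp_apply,
          Submodule.subtypeL_apply]
        exact e4'
      exact e5.symm
    have hrange : LinearMap.range (A : H →ₗ[ℂ] H) = ⊤ := by
      rw [← Submodule.orthogonal_eq_bot_iff]
      exact hNbot
    rw [ContinuousLinearMap.isUnit_iff_bijective]
    constructor
    · intro a b hab
      have : A (a - b) = 0 := by rw [map_sub, hab, sub_self]
      exact sub_eq_zero.mp (hinj _ this)
    · intro y
      have : y ∈ LinearMap.range (A : H →ₗ[ℂ] H) := hrange ▸ Submodule.mem_top
      obtain ⟨z, hz⟩ := this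
      exact ⟨z, hz⟩
  · -- not Fredholm → not unit
    intro hF hu
    apply hF
    obtain ⟨v, hv⟩ := hu
    refine ⟨(↑v⁻¹ : H →L[ℂ] H), ?_, ?_⟩
    · have h1 : (↑v⁻¹ : H →L[ℂ] H) ∘L A - 1 = 0 := by
        have : (↑v⁻¹ : H →L[ℂ] H) ∘L A = (↑v⁻¹ * ↑v : H →L[ℂ] H) := by rw [hv]; rfl
        rw [this, Units.inv_mul, sub_self]
      rw [h1]
      simpa using isCompactOperator_zero
    · have h1 : A ∘L (↑v⁻¹ : H →L[ℂ] H) - 1 = 0 := by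
        have : A ∘L (↑v⁻¹ : H →L[ℂ] H) = (↑v * ↑v⁻¹ : H →L[ℂ] H) := by rw [hv]; rfl
        rw [this, Units.mul_inv, sub_self]
      rw [h1]
      simpa using isCompactOperator_zero
end

section
/- Let Y be a Banach space, S ∈ L(Y) with spectrum not containing a nonzero λ, and T ∈ L(Y) compact. If ‖(T - S)T‖ < |λ| · ‖(S - λI)⁻¹‖⁻¹, then T - λI is invertible. -/
open ContinuousLinearMap Metric Filter

/-- Riesz-theory step: a compact perturbation of `l • id` (`l ≠ 0`) which is
bounded below is surjective. -/
lemma aux_surj {Y : Type*} [NormedAddCommGroup Y] [NormedSpace ℂ Y] [CompleteSpace Y]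
    (T : Y →L[ℂ] Y) (hT : IsCompactOperator ⇑T) (l : ℂ) (hl0 : l ≠ 0)
    {c : NNReal} (hanti : AntilipschitzWith c ⇑(T - l • (1 : Y →L[ℂ] Y))) :
    Function.Surjective ⇑(T - l • (1 : Y →L[ℂ] Y)) := by
  set A : Y →L[ℂ] Y := T - l • 1 with hAdef
  by_contra hns
  rw [Function.Surjective] at hns
  push_neg at hns
  obtain ⟨y, hy⟩ := hns
  -- powers of A are antilipschitz
  have hmulapp : ∀ (f g : Y →L[ℂ] Y) (x : Y), (f * g) x = f (g x) := fun _ _ _ => rfl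
  have hpow : ∀ n : ℕ, AntilipschitzWith (c ^ n) ⇑(A ^ n) := by
    intro n
    induction n with
    | zero =>
      simpa using AntilipschitzWith.id
    | succ n ih =>
      have hco : ⇑(A ^ (n + 1)) = ⇑(A ^ n) ∘ ⇑A := by
        ext x; simp [pow_succ, hmulapp]
      rw [hco]
      have := ih.comp hanti
      rwa [mul_comm] at this
  have hApow_inj : ∀ n : ℕ, Function.Injective ⇑(A ^ n) := fun n => (hpow n).injective
  set F : ℕ → Submodule ℂ Y := fun n => LinearMap.range ((A ^ n : Y →L[ℂ] Y) : Y →ₗ[ℂ] Y) with hFdef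
  have hFclosed : ∀ n, IsClosed (F n : Set Y) := by
    intro n
    have : (F n : Set Y) = Set.range ⇑(A ^ n) := by
      simp only [hFdef, LinearMap.coe_range, ContinuousLinearMap.coe_coe]
    rw [this]
    exact (hpow n).isClosed_range (A ^ n).uniformContinuous
  have hFstep : ∀ n, F (n + 1) ≤ F n := by
    intro n z hz
    obtain ⟨x, hx⟩ := hz
    exact ⟨A x, by rw [← hx]; simp [pow_succ, hmulapp]⟩
  have hFanti : ∀ {m n : ℕ}, m ≤ n → F n ≤ F m :=
    fun {m n} h => antitone_nat_of_succ_le hFstep h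
  have hAmem : ∀ n, ∀ z ∈ F n, A z ∈ F (n + 1) := by
    intro n z hz
    obtain ⟨x, hx⟩ := hz
    refine ⟨x, ?_⟩
    rw [← hx]
    have : A ^ (n+1) = A * A ^ n := by rw [pow_succ']
    rw [this]; rfl
  have hTA : Commute T A := by
    simp only [hAdef]
    exact (Commute.refl T).sub_right ((Commute.one_right T).smul_right l)
  have hTmem : ∀ n, ∀ z ∈ F n, T z ∈ F n := by
    intro n z hz
    obtain ⟨x, hx⟩ := hz
    refine ⟨T x, ?_⟩
    have : A ^ n * T = T * A ^ n := ((hTA.pow_right n).symm).eq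
    calc (A ^ n) (T x) = (A ^ n * T) x := rfl
      _ = (T * A ^ n) x := by rw [this]
      _ = T z := by rw [hmulapp]; exact congrArg T hx
  -- strict decrease
  have hstrict : ∀ n : ℕ, (A ^ n) y ∈ F n ∧ (A ^ n) y ∉ F (n + 1) := by
    intro n
    refine ⟨⟨y, rfl⟩, ?_⟩
    rintro ⟨z, hz⟩
    have hz' : (A ^ n) (A z) = (A ^ n) y := by
      rw [← hz, ContinuousLinearMap.coe_coe, pow_succ, hmulapp]
    exact hy z (hApow_inj n hz')
  -- Riesz sequence
  have key : ∀ n : ℕ, ∃ x : Y, x ∈ F n ∧ ‖x‖ = 1 ∧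
      ∀ w ∈ F (n + 1), (1/2 : ℝ) ≤ ‖x - w‖ := by
    intro n
    set G : Submodule ℂ (F n) := (F (n+1)).comap (F n).subtype with hGdef
    have hGclosed : IsClosed (G : Set (F n)) :=
      (hFclosed (n+1)).preimage continuous_subtype_val
    have hGne : ∃ v : (F n), v ∉ G := by
      refine ⟨⟨(A ^ n) y, (hstrict n).1⟩, ?_⟩
      intro hmem
      exact (hstrict n).2 hmem
    obtain ⟨x₀, hx₀G, hx₀⟩ := riesz_lemma hGclosed hGne (show (1/2 : ℝ) < 1 by norm_num)
    have hx₀ne : x₀ ≠ 0 := by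
      intro h0
      exact hx₀G (h0 ▸ G.zero_mem)
    have hnx₀ : (0:ℝ) < ‖x₀‖ := norm_pos_iff.mpr hx₀ne
    refine ⟨(‖x₀‖⁻¹ : ℝ) • (x₀ : Y), ?_, ?_, ?_⟩
    · exact (F n).smul_of_tower_mem _ x₀.2
    · rw [norm_smul, Real.norm_eq_abs, abs_of_pos (inv_pos.mpr hnx₀)]
      exact inv_mul_cancel₀ hnx₀.ne'
    · intro w hw
      have hwFn : w ∈ F n := hFstep n hw
      have hmemFn : ‖x₀‖ • w ∈ F n := (F n).smul_of_tower_mem _ hwFn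
      have hGw : (⟨‖x₀‖ • w, hmemFn⟩ : F n) ∈ G := by
        simp only [hGdef, Submodule.mem_comap, Submodule.coe_subtype]
        exact (F (n+1)).smul_of_tower_mem _ hw
      have := hx₀ _ hGw
      have heq : (‖x₀‖⁻¹ : ℝ) • (x₀ : Y) - w = (‖x₀‖⁻¹ : ℝ) • ((x₀ : Y) - ‖x₀‖ • w) := by
        rw [smul_sub, smul_smul, inv_mul_cancel₀ hnx₀.ne', one_smul]
      rw [heq, norm_smul]
      have hsub : ‖(x₀ : Y) - ‖x₀‖ • w‖ = ‖x₀ - (⟨‖x₀‖ • w, hmemFn⟩ : F n)‖ := rfl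
      rw [hsub]
      have hnx₀' : (0:ℝ) < ‖(x₀ : Y)‖ := hnx₀
      calc (1/2 : ℝ) = ‖(x₀ : Y)‖⁻¹ * ((1/2) * ‖x₀‖) := by
            rw [show ‖x₀‖ = ‖(x₀ : Y)‖ from rfl]
            field_simp
        _ ≤ ‖(‖x₀‖⁻¹ : ℝ)‖ * ‖x₀ - (⟨‖x₀‖ • w, hmemFn⟩ : F n)‖ := by
            rw [Real.norm_eq_abs, abs_of_pos (inv_pos.mpr hnx₀)]
            exact mul_le_mul_of_nonneg_left this (inv_pos.mpr hnx₀).le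
  choose x hxmem hxnorm hxsep using key
  -- separation of T (x n)
  have hsep : ∀ m n : ℕ, n < m → (1/2 : ℝ) * ‖l‖ ≤ ‖T (x n) - T (x m)‖ := by
    intro m n hnm
    have hw1 : A (x n) ∈ F (n + 1) := hAmem n _ (hxmem n)
    have hw2 : T (x m) ∈ F (n + 1) := hFanti hnm (hTmem m _ (hxmem m))
    set w : Y := T (x m) - A (x n) with hwdef
    have hwmem : w ∈ F (n + 1) := (F (n+1)).sub_mem hw2 hw1
    have hTxn : T (x n) = l • x n + A (x n) := by
      simp [hAdef]
    have heq : T (x n) - T (x m) = l • (x n - l⁻¹ • w) := by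
      rw [smul_sub, smul_inv_smul₀ hl0, hTxn, hwdef]
      abel
    rw [heq, norm_smul]
    have hs : (1/2 : ℝ) ≤ ‖x n - l⁻¹ • w‖ :=
      hxsep n _ ((F (n+1)).smul_mem _ hwmem)
    calc (1/2 : ℝ) * ‖l‖ = ‖l‖ * (1/2) := by ring
      _ ≤ ‖l‖ * ‖x n - l⁻¹ • w‖ := mul_le_mul_of_nonneg_left hs (norm_nonneg l)
  -- compactness contradiction
  have hcpt : IsCompact (closure (⇑T '' Metric.closedBall 0 1)) :=
    hT.isCompact_closure_image_closedBall 1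
  have hmem : ∀ n : ℕ, T (x n) ∈ closure (⇑T '' Metric.closedBall 0 1) := by
    intro n
    apply subset_closure
    exact ⟨x n, by simp [Metric.mem_closedBall, (hxnorm n).le, dist_eq_norm], rfl⟩
  obtain ⟨a, _, φ, hφ, hconv⟩ := hcpt.tendsto_subseq hmem
  have hcauchy := hconv.cauchySeq
  rw [Metric.cauchySeq_iff] at hcauchy
  have hlpos : (0:ℝ) < ‖l‖ := norm_pos_iff.mpr hl0
  obtain ⟨N, hN⟩ := hcauchy ((1/2) * ‖l‖) (by positivity)
  have h1 := hN (N+1) (by omega) N (by omega)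
  have h2 := hsep (φ (N+1)) (φ N) (hφ (by omega))
  rw [dist_eq_norm] at h1
  simp only [Function.comp_apply] at h1
  rw [norm_sub_rev] at h1
  exact absurd h1 (not_lt.mpr h2)

/-- Hackbusch, Theorem 4.7.7: if `λ ∉ σ(S) ∪ {0}`, `T` is compact and
`‖(T - S)T‖ < |λ| ‖(S - λI)⁻¹‖⁻¹`, then `T - λI` is invertible. -/
theorem stmt_2 {Y : Type*} [NormedAddCommGroup Y] [NormedSpace ℂ Y] [CompleteSpace Y]
    (S T : Y →L[ℂ] Y) (hT : IsCompactOperator ⇑T) (l : ℂ)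
    (hl0 : l ≠ 0) (hl : l ∉ spectrum ℂ S)
    (h : ‖(T - S) ∘L T‖ < ‖l‖ * ‖Ring.inverse (S - l • (1 : Y →L[ℂ] Y))‖⁻¹) :
    IsUnit (T - l • (1 : Y →L[ℂ] Y)) := by
  -- S - l•1 is a unit
  have hS : IsUnit (S - l • (1 : Y →L[ℂ] Y)) := by
    rw [spectrum.notMem_iff] at hl
    have := hl.neg
    rwa [neg_sub, Algebra.algebraMap_eq_smul_one] at this
  set R : Y →L[ℂ] Y := Ring.inverse (S - l • (1 : Y →L[ℂ] Y)) with hRdef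
  have hR1 : R * (S - l • 1) = 1 := Ring.inverse_mul_cancel _ hS
  set A : Y →L[ℂ] Y := T - l • 1 with hAdef
  set E : Y →L[ℂ] Y := (T - S) ∘L T with hEdef
  have hE : E = (T - S) * T := rfl
  -- key algebraic identity, with `c` standing for `l • 1`
  have hgen : ∀ c : Y →L[ℂ] Y, T * c = c * T → R * c = R * S - 1 →
      ((1 : Y →L[ℂ] Y) - R * T) * (T - c) = -c - R * ((T - S) * T) := by
    intro c hTc hRS
    calc ((1 : Y →L[ℂ] Y) - R * T) * (T - c)
        = T - c - R * (T * T) + R * (T * c) := by noncomm_ring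
      _ = T - c - R * (T * T) + (R * c) * T := by rw [hTc, mul_assoc]
      _ = T - c - R * (T * T) + (R * S - 1) * T := by rw [hRS]
      _ = -c - R * ((T - S) * T) := by noncomm_ring
  have hTc : T * (l • (1 : Y →L[ℂ] Y)) = (l • 1) * T := by
    simp [mul_smul_comm, smul_mul_assoc]
  have hRS : R * (l • (1 : Y →L[ℂ] Y)) = R * S - 1 := by
    have h' := hR1
    rw [mul_sub, sub_eq_iff_eq_add] at h'
    rw [h']
    abel
  have hkey : ((1 : Y →L[ℂ] Y) - R * T) * A = -(l • (1 : Y →L[ℂ] Y)) - R * E := by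
    rw [hAdef, hE]
    exact hgen _ hTc hRS
  -- the norm of the correction term is < 1
  have hRpos : (0:ℝ) < ‖R‖ := by
    rcases (norm_nonneg R).lt_or_eq with h' | h'
    · exact h'
    · exfalso
      rw [← h'] at h
      simp only [inv_zero, mul_zero] at h
      exact absurd h (not_lt.mpr (norm_nonneg _))
  have hlpos : (0:ℝ) < ‖l‖ := norm_pos_iff.mpr hl0
  set t : Y →L[ℂ] Y := -(l⁻¹ • (R * E)) with htdef
  have htnorm : ‖t‖ < 1 := by
    have ht' : ‖t‖ = ‖l‖⁻¹ * ‖R * E‖ := by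
      rw [htdef, norm_neg]
      rw [show ‖l⁻¹ • (R * E)‖ = ‖l⁻¹‖ * ‖R * E‖ from norm_smul l⁻¹ (R * E), norm_inv]
    rw [ht']
    have h1 : ‖R * E‖ ≤ ‖R‖ * ‖E‖ := norm_mul_le R E
    have h2 : ‖R‖ * ‖E‖ < ‖R‖ * (‖l‖ * ‖R‖⁻¹) :=
      mul_lt_mul_of_pos_left h hRpos
    have h3 : ‖R‖ * (‖l‖ * ‖R‖⁻¹) = ‖l‖ := by
      field_simp
    calc ‖l‖⁻¹ * ‖R * E‖ ≤ ‖l‖⁻¹ * (‖R‖ * ‖E‖) :=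
          mul_le_mul_of_nonneg_left h1 (inv_pos.mpr hlpos).le
      _ < ‖l‖⁻¹ * ‖l‖ := by
          rw [h3] at h2
          exact mul_lt_mul_of_pos_left h2 (inv_pos.mpr hlpos)
      _ = 1 := inv_mul_cancel₀ hlpos.ne'
  set u : (Y →L[ℂ] Y)ˣ := Units.oneSub t htnorm with hudef
  -- left inverse of A
  have hBA : ((-l⁻¹) • ((1 : Y →L[ℂ] Y) - R * T)) * A = (u : Y →L[ℂ] Y) := by
    have hco : (u : Y →L[ℂ] Y) = 1 - t := rfl
    rw [hco, smul_mul_assoc, hkey, htdef, sub_neg_eq_add]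
    have hmod : (-l⁻¹) • (-(l • (1 : Y →L[ℂ] Y)) - R * E) =
        (l⁻¹ * l) • (1 : Y →L[ℂ] Y) + l⁻¹ • (R * E) := by module
    rw [hmod, inv_mul_cancel₀ hl0, one_smul]
  -- hence A is bounded below
  set B : Y →L[ℂ] Y := (-l⁻¹) • ((1 : Y →L[ℂ] Y) - R * T) with hBdef
  set L : Y →L[ℂ] Y := (↑u⁻¹ : Y →L[ℂ] Y) * B with hLdef
  have hLA : L * A = 1 := by
    rw [hLdef, mul_assoc, hBA]
    exact u.inv_mul
  have hbound : ∀ x : Y, ‖x‖ ≤ ‖L‖₊ * ‖A x‖ := by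
    intro x
    have hx : L (A x) = x := by
      have h1 : (L * A) x = (1 : Y →L[ℂ] Y) x := by rw [hLA]
      simpa using h1
    calc ‖x‖ = ‖L (A x)‖ := by rw [hx]
      _ ≤ ‖L‖ * ‖A x‖ := L.le_opNorm (A x)
      _ = ‖L‖₊ * ‖A x‖ := by rw [coe_nnnorm]
  have hanti : AntilipschitzWith ‖L‖₊ ⇑A :=
    ContinuousLinearMap.antilipschitz_of_bound A hbound
  -- A is bijective, hence a unit
  have hsurj : Function.Surjective ⇑A := aux_surj T hT l hl0 hanti
  have hinj : Function.Injective ⇑A := hanti.injective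
  exact ContinuousLinearMap.isUnit_iff_bijective.mpr ⟨hinj, hsurj⟩
end

section
/- Let Y be a Banach space, T ∈ L(Y) compact, and (T_N) a collectively compact sequence in L(Y) converging strongly to T. Then ‖(T - T_N)T‖ → 0 as N → ∞. -/
open Filter Topology Metric Set

/-- Homogeneity helper: a unit-ball bound gives a global linear bound. -/
lemma unit_ball_bound {Y : Type*} [NormedAddCommGroup Y] [NormedSpace ℂ Y]
    (A : Y →L[ℂ] Y) (C : ℝ) (h : ∀ φ : Y, ‖φ‖ ≤ 1 → ‖A φ‖ ≤ C) :
    ∀ z : Y, ‖A z‖ ≤ C * ‖z‖ := by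
  intro z
  rcases eq_or_ne z 0 with rfl | hz
  · simp
  · have hnz : (0:ℝ) < ‖z‖ := norm_pos_iff.mpr hz
    have h1 : ‖(‖z‖⁻¹ : ℂ) • z‖ ≤ 1 := by
      rw [norm_smul]
      simp [hnz.ne', abs_of_nonneg hnz.le]
    have := h _ h1
    rw [map_smul, norm_smul] at this
    have : ‖z‖⁻¹ * ‖A z‖ ≤ C := by
      simpa [abs_of_nonneg hnz.le] using this
    calc ‖A z‖ = ‖z‖ * (‖z‖⁻¹ * ‖A z‖) := by field_simp
      _ ≤ ‖z‖ * C := by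
          exact mul_le_mul_of_nonneg_left this hnz.le
      _ = C * ‖z‖ := mul_comm _ _

/-- if `T` is compact and `(T_N)` is collectively compact and converges
strongly to `T`, then `‖(T - T_N)T‖ → 0`. -/
theorem stmt_8 {Y : Type*} [NormedAddCommGroup Y] [NormedSpace ℂ Y] [CompleteSpace Y]
    (T : Y →L[ℂ] Y) (TN : ℕ → (Y →L[ℂ] Y)) (hT : IsCompactOperator ⇑T)
    (hcc : IsCompact (closure {y : Y | ∃ (N : ℕ) (φ : Y), ‖φ‖ ≤ 1 ∧ TN N φ = y}))
    (hstrong : ∀ φ : Y, Tendsto (fun N => TN N φ) atTop (𝓝 (T φ))) :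
    Tendsto (fun N => ‖(T - TN N) ∘L T‖) atTop (𝓝 0) := by
  -- uniform bound on the `TN N`
  obtain ⟨C, hC⟩ := hcc.isBounded.exists_norm_le
  have hC0 : 0 ≤ C := by
    have := hC ((TN 0) 0) (subset_closure ⟨0, 0, by simp, rfl⟩)
    exact le_trans (norm_nonneg _) this
  have hTNbd : ∀ N (z : Y), ‖TN N z‖ ≤ C * ‖z‖ := fun N =>
    unit_ball_bound (TN N) C fun φ hφ =>
      hC _ (subset_closure ⟨N, φ, hφ, rfl⟩)
  -- compact set K = closure of T '' closedBall 0 1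
  set K := closure (T '' closedBall 0 1) with hK
  have hKc : IsCompact K := by
    have h := IsCompactOperator.isCompact_closure_image_closedBall (𝕜₁ := ℂ)
      (f := (T : Y →ₗ[ℂ] Y)) hT 1
    simpa [hK] using h
  rw [Metric.tendsto_atTop]
  intro ε hε
  set δ : ℝ := ε / 3 / (C + ‖T‖ + 1) with hδdef
  have hden : (0:ℝ) < C + ‖T‖ + 1 := by positivity
  have hδ : 0 < δ := by positivity
  -- finite δ-net of K
  obtain ⟨t, hts, htfin, hcover⟩ :=
    hKc.elim_finite_subcover_image (fun y (_ : y ∈ K) => isOpen_ball (x := y) (ε := δ))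
      (fun x hx => mem_biUnion hx (mem_ball_self hδ))
  -- eventual closeness at the net points
  have hev : ∀ᶠ N in atTop, ∀ y ∈ t, ‖T y - TN N y‖ < ε / 3 := by
    have : ∀ y ∈ t, ∀ᶠ N in atTop, ‖T y - TN N y‖ < ε / 3 := by
      intro y _
      have := (hstrong y).sub_const (T y)
      have h2 : Tendsto (fun N => ‖TN N y - T y‖) atTop (𝓝 0) := by
        simpa [Function.comp_def] using (tendsto_norm_zero.comp (by simpa using this))
      have := (Metric.tendsto_atTop.mp h2) (ε / 3) (by positivity)
      obtain ⟨N₀, hN₀⟩ := this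
      refine eventually_atTop.mpr ⟨N₀, fun N hN => ?_⟩
      have := hN₀ N hN
      rw [Real.dist_eq] at this
      rw [norm_sub_rev]
      exact lt_of_abs_lt (by simpa using this)
    exact (htfin.eventually_all).mpr this
  obtain ⟨N₀, hN₀⟩ := eventually_atTop.mp hev
  refine ⟨N₀, fun N hNge => ?_⟩
  have hN := hN₀ N hNge
  rw [Real.dist_eq, sub_zero, abs_of_nonneg (norm_nonneg _)]
  -- bound on K
  have hKbd : ∀ x ∈ K, ‖(T - TN N) x‖ ≤ 2 * ε / 3 := by
    intro x hx
    obtain ⟨y, hyt, hxy⟩ := by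
      have := hcover hx
      simpa using this
    have hyK : y ∈ K := hts hyt
    have h1 : ‖(T - TN N) (x - y)‖ ≤ (C + ‖T‖) * δ := by
      have hxy' : ‖x - y‖ ≤ δ := le_of_lt (by simpa [dist_eq_norm] using hxy)
      calc ‖(T - TN N) (x - y)‖ ≤ ‖T (x - y)‖ + ‖TN N (x - y)‖ := by
            simpa using norm_sub_le (T (x-y)) (TN N (x-y))
        _ ≤ ‖T‖ * ‖x - y‖ + C * ‖x - y‖ :=
            add_le_add (T.le_opNorm _) (hTNbd N _)
        _ = (C + ‖T‖) * ‖x - y‖ := by ring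
        _ ≤ (C + ‖T‖) * δ := by
            apply mul_le_mul_of_nonneg_left hxy'
            positivity
    have h2 : (C + ‖T‖) * δ ≤ ε / 3 := by
      rw [hδdef]
      rw [div_eq_mul_inv (ε/3)]
      calc (C + ‖T‖) * (ε / 3 * (C + ‖T‖ + 1)⁻¹)
          = ε / 3 * ((C + ‖T‖) * (C + ‖T‖ + 1)⁻¹) := by ring
        _ ≤ ε / 3 * 1 := by
            apply mul_le_mul_of_nonneg_left _ (by positivity)
            rw [mul_inv_le_iff₀ hden]
            linarith
        _ = ε / 3 := mul_one _
    calc ‖(T - TN N) x‖ = ‖(T - TN N) (x - y) + (T - TN N) y‖ := by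
          congr 1; rw [← map_add]; congr 1; abel
      _ ≤ ‖(T - TN N) (x - y)‖ + ‖(T - TN N) y‖ := norm_add_le _ _
      _ ≤ ε / 3 + ε / 3 := by
          refine add_le_add (h1.trans h2) ?_
          have := hN y hyt
          simpa using this.le
      _ = 2 * ε / 3 := by ring
  -- operator norm bound via homogeneity
  have hcomp : ∀ φ : Y, ‖φ‖ ≤ 1 → ‖((T - TN N) ∘L T) φ‖ ≤ 2 * ε / 3 := by
    intro φ hφ
    exact hKbd _ (subset_closure ⟨φ, by simpa using hφ, rfl⟩)
  have := unit_ball_bound ((T - TN N) ∘L T) (2 * ε / 3) hcomp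
  have hnorm : ‖(T - TN N) ∘L T‖ ≤ 2 * ε / 3 := by
    apply ContinuousLinearMap.opNorm_le_bound _ (by positivity)
    exact this
  linarith
end

section
/- Let ψ : ℝ → ℂ be a 1-periodic function that extends to a bounded analytic function on the strip Σ_c = {z : |Im z| < c} for some c > 0. Then for every N ∈ ℕ the midpoint-rule error satisfies |∫₀¹ ψ(x) dx - (1/N) Σ_{q=1}^N ψ((q - 1/2)/N)| ≤ 2 ‖ψ‖_c / (e^{2πNc} - 1), where ‖ψ‖_c = sup_{z ∈ Σ_c} |ψ(z)|. -/
open Complex MeasureTheory Set intervalIntegral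
open scoped Interval

lemma stmt9_gdiff (ψ : ℂ → ℂ) (c : ℝ)
    (hanal : DifferentiableOn ℂ ψ {z : ℂ | |z.im| < c}) (k : ℤ) :
    DifferentiableOn ℂ (fun z => ψ z * Complex.exp (2 * Real.pi * I * (-k) * z))
      {z : ℂ | |z.im| < c} :=
  hanal.mul (((differentiable_const _).mul differentiable_id).cexp).differentiableOn

lemma stmt9_shift (ψ : ℂ → ℂ) (c : ℝ) (hc : 0 < c)
    (hanal : DifferentiableOn ℂ ψ {z : ℂ | |z.im| < c})
    (hper : ∀ z : ℂ, |z.im| < c → ψ (z + 1) = ψ z) (k : ℤ) {y : ℝ} (hy : |y| < c) :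
    (∫ x : ℝ in (0:ℝ)..1, ψ (x + y * I) * Complex.exp (2 * Real.pi * I * (-k) * (x + y * I)))
      = ∫ x : ℝ in (0:ℝ)..1, ψ x * Complex.exp (2 * Real.pi * I * (-k) * x) := by
  set g : ℂ → ℂ := fun z => ψ z * Complex.exp (2 * Real.pi * I * (-k) * z) with hg
  have habs : ∀ t : ℝ, t ∈ [[(0:ℝ), y]] → |t| < c := by
    intro t ht
    rcases mem_uIcc.mp ht with ⟨h1, h2⟩ | ⟨h1, h2⟩
    · exact lt_of_le_of_lt (by simpa using abs_le_max_abs_abs h1 h2) hy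
    · exact lt_of_le_of_lt (by simpa using abs_le_max_abs_abs h1 h2) hy
  have key := Complex.integral_boundary_rect_eq_zero_of_differentiableOn g 0 (1 + y * I)
    (by
      apply (stmt9_gdiff ψ c hanal k).mono
      rintro z ⟨-, hzim⟩
      simp only [mem_setOf_eq]
      apply habs
      simpa using hzim)
  simp only [show ((1:ℂ) + (y:ℂ) * I).re = 1 by simp, show ((1:ℂ) + (y:ℂ) * I).im = y by simp,
    Complex.zero_re, Complex.zero_im] at key
  have hv : (∫ t : ℝ in (0:ℝ)..y, g (((1:ℝ):ℂ) + t * I))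
      = ∫ t : ℝ in (0:ℝ)..y, g (((0:ℝ):ℂ) + t * I) := by
    apply intervalIntegral.integral_congr
    intro t ht
    have htc : |t| < c := habs t ht
    have him : (((t:ℝ) : ℂ) * I).im = t := by simp
    have hpsi : ψ ((t : ℂ) * I + 1) = ψ ((t : ℂ) * I) := hper _ (by rw [him]; exact htc)
    have hexp : Complex.exp (2 * Real.pi * I * (-k) * ((t:ℂ) * I + 1))
        = Complex.exp (2 * Real.pi * I * (-k) * ((t:ℂ) * I)) := by
      rw [mul_add, Complex.exp_add, mul_one,
        show ((2:ℂ) * Real.pi * I * (-(k:ℂ))) = ((-k : ℤ):ℂ) * (2 * Real.pi * I) by push_cast; ring,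
        Complex.exp_int_mul_two_pi_mul_I, mul_one]
    simp only [hg]
    rw [show (((1:ℝ):ℂ)) + (t:ℂ) * I = (t : ℂ) * I + 1 by push_cast; ring,
      show (((0:ℝ):ℂ)) + (t:ℂ) * I = (t:ℂ) * I by push_cast; ring, hpsi, hexp]
  rw [hv] at key
  simp only [smul_eq_mul] at key
  have key2 : (∫ x : ℝ in (0:ℝ)..1, g ((x:ℂ) + ((0:ℝ):ℂ) * I))
      = ∫ x : ℝ in (0:ℝ)..1, g ((x:ℂ) + (y:ℂ) * I) := by
    linear_combination key
  have hA : (∫ x : ℝ in (0:ℝ)..1, g ((x:ℂ) + ((0:ℝ):ℂ) * I)) = ∫ x : ℝ in (0:ℝ)..1, g x := by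
    apply intervalIntegral.integral_congr
    intro x hx
    norm_num
  rw [hA] at key2
  rw [← key2]

lemma stmt9_coeff_bound (ψ : ℂ → ℂ) (c : ℝ) (hc : 0 < c)
    (hanal : DifferentiableOn ℂ ψ {z : ℂ | |z.im| < c})
    (hper : ∀ z : ℂ, |z.im| < c → ψ (z + 1) = ψ z)
    (M : ℝ) (hM : ∀ z : ℂ, |z.im| < c → ‖ψ z‖ ≤ M) (k : ℤ) :
    ‖∫ x : ℝ in (0:ℝ)..1, ψ x * Complex.exp (2 * Real.pi * I * (-k) * x)‖
      ≤ M * Real.exp (-(2 * Real.pi * |(k:ℝ)| * c)) := by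
  set I₀ := ∫ x : ℝ in (0:ℝ)..1, ψ x * Complex.exp (2 * Real.pi * I * (-k) * x) with hI₀
  have hopen : ∀ y ∈ Ioo (-c) c, ‖I₀‖ ≤ M * Real.exp (2 * Real.pi * k * y) := by
    intro y hy
    have hyc : |y| < c := abs_lt.mpr ⟨hy.1, hy.2⟩
    rw [hI₀, ← stmt9_shift ψ c hc hanal hper k hyc]
    have : ∀ x ∈ Set.uIoc (0:ℝ) 1,
        ‖ψ (x + y * I) * Complex.exp (2 * Real.pi * I * (-k) * (x + y * I))‖
          ≤ M * Real.exp (2 * Real.pi * k * y) := by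
      intro x hx
      rw [norm_mul]
      have h1 : ‖ψ ((x:ℂ) + y * I)‖ ≤ M := hM _ (by simpa using hyc)
      have h2 : ‖Complex.exp (2 * Real.pi * I * (-k) * ((x:ℂ) + y * I))‖
          = Real.exp (2 * Real.pi * k * y) := by
        rw [Complex.norm_exp]
        congr 1
        have : ((2:ℂ) * Real.pi * I * (-k) * ((x:ℂ) + y * I))
            = (2 * Real.pi * k * y : ℝ) + (-(2 * Real.pi * k * x) : ℝ) * I := by
          push_cast; linear_combination (-2*(Real.pi:ℂ)*k*y) * Complex.I_sq
        rw [this]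
        simp
      rw [h2]
      exact mul_le_mul_of_nonneg_right h1 (Real.exp_pos _).le
    calc ‖∫ x : ℝ in (0:ℝ)..1, ψ (x + y * I) * Complex.exp (2 * Real.pi * I * (-k) * (x + y * I))‖
        ≤ M * Real.exp (2 * Real.pi * k * y) * |1 - 0| :=
          intervalIntegral.norm_integral_le_of_norm_le_const this
      _ = M * Real.exp (2 * Real.pi * k * y) := by norm_num
  have hclosed : ∀ y ∈ Icc (-c) c, ‖I₀‖ ≤ M * Real.exp (2 * Real.pi * k * y) := by
    intro y hy
    have hmem : y ∈ closure (Ioo (-c) c) := by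
      rw [closure_Ioo (by linarith : -c ≠ c)]
      exact hy
    have hne : (nhdsWithin y (Ioo (-c) c)).NeBot := mem_closure_iff_nhdsWithin_neBot.mp hmem
    refine ge_of_tendsto (f := fun y => M * Real.exp (2 * Real.pi * k * y))
      (x := nhdsWithin y (Ioo (-c) c)) ?_ ?_
    · exact (Continuous.tendsto (by continuity) y).mono_left nhdsWithin_le_nhds
    · exact eventually_nhdsWithin_of_forall hopen
  rcases le_or_gt 0 (k:ℝ) with hk | hk
  · have := hclosed (-c) ⟨le_refl _, by linarith⟩
    convert this using 3
    rw [_root_.abs_of_nonneg hk]; ring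
  · have := hclosed c ⟨by linarith, le_refl _⟩
    convert this using 3
    rw [_root_.abs_of_neg hk]; ring

/-- midpoint rule for 1-periodic analytic functions, Kress Thm 9.28:
exponentially small quadrature error in terms of the bound on the strip `Σ_c`. -/
theorem stmt_9 (ψ : ℂ → ℂ) (c : ℝ) (hc : 0 < c)
    (hanal : DifferentiableOn ℂ ψ {z : ℂ | |z.im| < c})
    (hper : ∀ z : ℂ, |z.im| < c → ψ (z + 1) = ψ z)
    (M : ℝ) (hM : ∀ z : ℂ, |z.im| < c → ‖ψ z‖ ≤ M)
    (N : ℕ) (hN : 0 < N) :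
    ‖(∫ x in (0:ℝ)..1, ψ x) -
        (1 / N) * ∑ q : Fin N, ψ ((((q : ℕ) : ℂ) + 1 / 2) / (N : ℂ))‖
      ≤ 2 * M / (Real.exp (2 * Real.pi * N * c) - 1) := by
  haveI : Fact (0 < (1:ℝ)) := ⟨one_pos⟩
  set f : ℝ → ℂ := fun x => ψ x with hf
  have hzero : ∀ x : ℝ, |((x:ℂ)).im| < c := fun x => by simpa using hc
  have hfper : Function.Periodic f 1 := by
    intro x
    have := hper x (hzero x)
    simpa [hf] using this
  have hopen : IsOpen {z : ℂ | |z.im| < c} :=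
    isOpen_lt (_root_.continuous_abs.comp Complex.continuous_im) continuous_const
  have hfcont : Continuous f := by
    apply continuous_iff_continuousAt.mpr
    intro x
    exact ((hanal.differentiableAt (hopen.mem_nhds (hzero x))).continuousAt).comp
      Complex.continuous_ofReal.continuousAt
  have hFcont : Continuous hfper.lift := hfcont.quotient_liftOn' _
  set Fc : C(AddCircle (1:ℝ), ℂ) := ⟨hfper.lift, hFcont⟩ with hFc
  have hFval : ∀ x : ℝ, Fc (x : AddCircle (1:ℝ)) = ψ x := fun x => rfl
  -- Fourier coefficients
  have hcoeff : ∀ n : ℤ, fourierCoeff (⇑Fc) n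
      = ∫ x : ℝ in (0:ℝ)..1, ψ x * Complex.exp (2 * Real.pi * I * (-n) * x) := by
    intro n
    rw [fourierCoeff_eq_intervalIntegral (⇑Fc) n 0]
    rw [zero_add, show ((1:ℝ)/1) = 1 by norm_num, one_smul]
    apply intervalIntegral.integral_congr
    intro x hx
    show (fourier (-n)) (x : AddCircle (1:ℝ)) • Fc (x : AddCircle (1:ℝ))
        = ψ x * Complex.exp (2 * Real.pi * I * (-n) * x)
    rw [hFval x, smul_eq_mul, fourier_coe_apply, mul_comm]
    push_cast
    rw [div_one]
  have hM0 : 0 ≤ M := le_trans (norm_nonneg (ψ 0)) (hM 0 (by simpa using hc))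
  set r : ℝ := Real.exp (-(2 * Real.pi * c)) with hrdef
  have hr0 : 0 < r := Real.exp_pos _
  have hr1 : r < 1 := by
    rw [hrdef, ← Real.exp_zero]
    exact Real.exp_lt_exp.mpr (neg_lt_zero.mpr (by positivity))
  have habs : ∀ n : ℤ, |((n:ℝ))| = ((n.natAbs : ℕ) : ℝ) := by
    intro n
    rw [Nat.cast_natAbs]
    push_cast
    rfl
  have hbound : ∀ n : ℤ, ‖fourierCoeff (⇑Fc) n‖ ≤ M * r ^ n.natAbs := by
    intro n
    rw [hcoeff n]
    refine le_trans (stmt9_coeff_bound ψ c hc hanal hper M hM n) (le_of_eq ?_)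
    congr 1
    rw [hrdef, ← Real.exp_nat_mul]
    congr 1
    rw [habs n]
    ring
  have hgeo_nat : Summable (fun n : ℕ => r ^ n) := summable_geometric_of_lt_one hr0.le hr1
  have hsummable : Summable (fourierCoeff (⇑Fc)) := by
    apply Summable.of_norm
    apply Summable.of_nonneg_of_le (fun n => norm_nonneg _) hbound
    apply Summable.mul_left
    apply Summable.of_nat_of_neg_add_one
    · simpa using hgeo_nat
    · have h1 : Summable (fun n : ℕ => r ^ (n + 1)) := (summable_nat_add_iff 1).mpr hgeo_nat
      apply h1.congr
      intro n
      have hnn : ((-((n:ℤ) + 1))).natAbs = n + 1 := by omega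
      rw [hnn]
  -- nodes
  set x : Fin N → ℝ := fun q => ((q:ℝ) + 1/2)/N with hx
  have hpoint : ∀ q : Fin N, HasSum
      (fun n : ℤ => fourierCoeff (⇑Fc) n * Complex.exp (2 * Real.pi * I * n * (x q)))
      (ψ (x q)) := by
    intro q
    have h := has_pointwise_sum_fourier_series_of_summable hsummable ((x q : ℝ) : AddCircle (1:ℝ))
    rw [hFval (x q)] at h
    refine h.congr_fun ?_
    intro n
    rw [smul_eq_mul, fourier_coe_apply]
    push_cast
    rw [div_one]
  have hsum1 : HasSum
      (fun n : ℤ => ∑ q : Fin N, fourierCoeff (⇑Fc) n * Complex.exp (2 * Real.pi * I * n * (x q)))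
      (∑ q : Fin N, ψ (x q)) := hasSum_sum (fun q _ => hpoint q)
  set w : ℤ → ℂ := fun n => (1/(N:ℂ)) * ∑ q : Fin N, Complex.exp (2 * Real.pi * I * n * (x q))
    with hwdef
  have hsum2 : HasSum (fun n : ℤ => fourierCoeff (⇑Fc) n * w n)
      ((1/(N:ℂ)) * ∑ q : Fin N, ψ (x q)) := by
    refine (hsum1.mul_left (1/(N:ℂ))).congr_fun ?_
    intro n
    rw [hwdef, ← Finset.mul_sum]
    ring
  have hNC : (N:ℂ) ≠ 0 := Nat.cast_ne_zero.mpr hN.ne'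
  have hw0 : w 0 = 1 := by
    rw [hwdef]
    simp only [Int.cast_zero, mul_zero, zero_mul, Complex.exp_zero]
    rw [Finset.sum_const, Finset.card_univ, Fintype.card_fin]
    field_simp
    simp
  have hwnorm : ∀ n : ℤ, ‖w n‖ ≤ 1 := by
    intro n
    rw [hwdef, norm_mul]
    have hone : ∀ q : Fin N, ‖Complex.exp (2 * Real.pi * I * (n:ℂ) * ((x q : ℝ):ℂ))‖ = 1 := by
      intro q
      rw [show (2 * (Real.pi:ℂ) * I * (n:ℂ) * ((x q : ℝ):ℂ))
          = ((2 * Real.pi * n * x q : ℝ) : ℂ) * I by push_cast; ring]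
      rw [Complex.norm_exp_ofReal_mul_I]
    have h2 : ‖∑ q : Fin N, Complex.exp (2 * Real.pi * I * n * (x q))‖ ≤ (N:ℝ) := by
      refine le_trans (norm_sum_le _ _) ?_
      calc ∑ q : Fin N, ‖Complex.exp (2 * Real.pi * I * n * (x q))‖
          = ∑ _q : Fin N, (1:ℝ) := Finset.sum_congr rfl (fun q _ => hone q)
        _ = N := by simp
        _ ≤ N := le_refl _
    have h3 : ‖(1/(N:ℂ))‖ = 1/(N:ℝ) := by
      rw [norm_div, norm_one, Complex.norm_natCast]
    rw [h3]
    have h4 := mul_le_mul_of_nonneg_left h2 (by positivity : (0:ℝ) ≤ 1/(N:ℝ))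
    refine le_trans h4 (le_of_eq ?_)
    field_simp
  have hwdvd : ∀ n : ℤ, ¬((N:ℤ) ∣ n) → w n = 0 := by
    intro n hdvd
    set z : ℂ := Complex.exp (2 * Real.pi * I * n / N) with hz
    have hterm : ∀ q : Fin N, Complex.exp (2 * Real.pi * I * n * (x q))
        = Complex.exp (Real.pi * I * n / N) * z ^ (q:ℕ) := by
      intro q
      rw [hz, ← Complex.exp_nat_mul, ← Complex.exp_add]
      congr 1
      rw [hx]
      push_cast
      field_simp
      ring
    have h2piI : (2*(Real.pi:ℂ)*I) ≠ 0 := by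
      simp [Real.pi_ne_zero, Complex.I_ne_zero]
    have hz1 : z ≠ 1 := by
      intro hzeq
      rcases Complex.exp_eq_one_iff.mp (hz ▸ hzeq) with ⟨m, hm⟩
      apply hdvd
      refine ⟨m, ?_⟩
      have hcast : (n:ℂ) = (N:ℂ) * m := by
        field_simp at hm
        have := mul_left_cancel₀ h2piI (show (2*(Real.pi:ℂ)*I) * (n:ℂ)
            = (2*(Real.pi:ℂ)*I) * ((N:ℂ) * m) by linear_combination (2*(Real.pi:ℂ)*I) * hm)
        exact this
      exact_mod_cast hcast
    have hzN : z ^ N = 1 := by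
      rw [hz, ← Complex.exp_nat_mul]
      rw [show ((N:ℂ) * (2 * Real.pi * I * n / N)) = (n:ℤ) * (2 * Real.pi * I) by
        field_simp]
      exact Complex.exp_int_mul_two_pi_mul_I n
    have hsumz : ∑ q : Fin N, z ^ (q:ℕ) = 0 := by
      rw [Fin.sum_univ_eq_sum_range (fun q => z ^ q), geom_sum_eq hz1, hzN, sub_self, zero_div]
    rw [hwdef]
    simp only [hterm]
    rw [← Finset.mul_sum, hsumz]
    ring
  -- the error series
  have hs0 : HasSum (fun n : ℤ => if n = 0 then fourierCoeff (⇑Fc) 0 else 0)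
      (fourierCoeff (⇑Fc) 0) := hasSum_ite_eq 0 _
  have hsE : HasSum
      (fun n : ℤ => (if n = 0 then fourierCoeff (⇑Fc) 0 else 0) - fourierCoeff (⇑Fc) n * w n)
      (fourierCoeff (⇑Fc) 0 - (1/(N:ℂ)) * ∑ q : Fin N, ψ (x q)) := hs0.sub hsum2
  set ρ : ℝ := r ^ N with hρdef
  have hρ0 : 0 < ρ := pow_pos hr0 N
  have hρ1 : ρ < 1 := pow_lt_one₀ hr0.le hr1 hN.ne'
  set u : ℤ → ℝ := fun n => if ((N:ℤ) ∣ n ∧ n ≠ 0) then M * r ^ n.natAbs else 0 with hu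
  have hterm : ∀ n : ℤ,
      ‖(if n = 0 then fourierCoeff (⇑Fc) 0 else 0) - fourierCoeff (⇑Fc) n * w n‖ ≤ u n := by
    intro n
    by_cases h0 : n = 0
    · subst h0
      rw [if_pos rfl, hw0, mul_one, sub_self, norm_zero, hu]
      simp
    · rw [if_neg h0, zero_sub, norm_neg]
      by_cases hd : (N:ℤ) ∣ n
      · rw [hu]
        simp only [if_pos (And.intro hd h0)]
        rw [norm_mul]
        calc ‖fourierCoeff (⇑Fc) n‖ * ‖w n‖ ≤ (M * r ^ n.natAbs) * 1 :=
              mul_le_mul (hbound n) (hwnorm n) (norm_nonneg _) (by positivity)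
          _ = M * r ^ n.natAbs := mul_one _
      · rw [hwdvd n hd, mul_zero, norm_zero, hu]
        simp [hd]
  -- summing u
  have hNZ : (N:ℤ) ≠ 0 := by exact_mod_cast hN.ne'
  have hinj : Function.Injective (fun m : ℤ => m * N) := fun a b h =>
    mul_right_cancel₀ hNZ h
  have hsupp : ∀ k : ℤ, k ∉ Set.range (fun m : ℤ => m * N) → u k = 0 := by
    intro k hk
    show (if ((N:ℤ) ∣ k ∧ k ≠ 0) then M * r ^ k.natAbs else 0) = 0
    rw [if_neg]
    rintro ⟨⟨m, hm⟩, -⟩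
    exact hk ⟨m, by simp [hm, mul_comm]⟩
  have hug : ∀ m : ℤ, u (m * N) = if m = 0 then 0 else M * ρ ^ m.natAbs := by
    intro m
    show (if ((N:ℤ) ∣ m * N ∧ m * N ≠ 0) then M * r ^ (m * N).natAbs else 0)
        = if m = 0 then 0 else M * ρ ^ m.natAbs
    by_cases hm : m = 0
    · subst hm; simp
    · rw [if_pos ⟨dvd_mul_left _ _, mul_ne_zero hm hNZ⟩, if_neg hm]
      congr 1
      rw [Int.natAbs_mul, hρdef, ← pow_mul]
      congr 1
      simp [mul_comm]
  have hgeoρ : HasSum (fun n : ℕ => (M * ρ) * ρ ^ n) (M * ρ * (1 - ρ)⁻¹) :=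
    (hasSum_geometric_of_lt_one hρ0.le hρ1).mul_left _
  have hpos : HasSum (fun n : ℕ => u ((n:ℤ) * N)) (M * ρ * (1 - ρ)⁻¹) := by
    have h1 : HasSum (fun n : ℕ => u ((((n+1:ℕ)):ℤ) * N)) (M * ρ * (1 - ρ)⁻¹) := by
      refine hgeoρ.congr_fun ?_
      intro n
      rw [hug]
      rw [if_neg (by exact_mod_cast Nat.succ_ne_zero n)]
      have : (((n+1:ℕ)):ℤ).natAbs = n + 1 := by omega
      rw [this, pow_succ]
      ring
    have h2 := (hasSum_nat_add_iff (f := fun n : ℕ => u ((n:ℤ) * N)) 1).mp h1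
    simpa [hug] using h2
  have hneg : HasSum (fun n : ℕ => u ((-((n:ℤ)+1)) * N)) (M * ρ * (1 - ρ)⁻¹) := by
    refine hgeoρ.congr_fun ?_
    intro n
    rw [hug, if_neg (by omega)]
    have : ((-((n:ℤ)+1))).natAbs = n + 1 := by omega
    rw [this, pow_succ]
    ring
  have hsug : HasSum (fun m : ℤ => u (m * N)) (M * ρ * (1 - ρ)⁻¹ + M * ρ * (1 - ρ)⁻¹) :=
    HasSum.of_nat_of_neg_add_one hpos hneg
  have hsu : HasSum u (M * ρ * (1 - ρ)⁻¹ + M * ρ * (1 - ρ)⁻¹) :=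
    (Function.Injective.hasSum_iff hinj hsupp).mp hsug
  -- conclusion
  have hint : (∫ x in (0:ℝ)..1, ψ x) = fourierCoeff (⇑Fc) 0 := by
    rw [hcoeff 0]
    apply intervalIntegral.integral_congr
    intro t ht
    simp
  have hnode : ∀ q : Fin N, ψ ((((q:ℕ):ℂ) + 1/2)/(N:ℂ)) = ψ ((x q : ℝ) : ℂ) := by
    intro q
    congr 1
    rw [hx]
    push_cast
    ring
  rw [hint, Finset.sum_congr rfl (fun q _ => hnode q)]
  have hsnorm : Summable (fun n : ℤ =>
      ‖(if n = 0 then fourierCoeff (⇑Fc) 0 else 0) - fourierCoeff (⇑Fc) n * w n‖) :=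
    Summable.of_nonneg_of_le (fun n => norm_nonneg _) hterm hsu.summable
  have hX1 : 1 < Real.exp (2 * Real.pi * N * c) := by
    rw [← Real.exp_zero]
    exact Real.exp_lt_exp.mpr (by positivity)
  have hfinal : M * ρ * (1 - ρ)⁻¹ + M * ρ * (1 - ρ)⁻¹
      = 2 * M / (Real.exp (2 * Real.pi * N * c) - 1) := by
    have hρX : ρ = (Real.exp (2 * Real.pi * N * c))⁻¹ := by
      rw [hρdef, hrdef, ← Real.exp_nat_mul, ← Real.exp_neg]
      congr 1
      ring
    rw [hρX]
    have hX0 : Real.exp (2 * Real.pi * N * c) ≠ 0 := (Real.exp_pos _).ne'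
    have hXm1 : Real.exp (2 * Real.pi * N * c) - 1 ≠ 0 := by
      intro h; nlinarith
    rw [eq_div_iff hXm1]
    field_simp
    ring
  calc ‖fourierCoeff (⇑Fc) 0 - 1/(N:ℂ) * ∑ q : Fin N, ψ ((x q : ℝ) : ℂ)‖
      = ‖∑' n : ℤ, ((if n = 0 then fourierCoeff (⇑Fc) 0 else 0) - fourierCoeff (⇑Fc) n * w n)‖ := by
        rw [hsE.tsum_eq]
    _ ≤ ∑' n : ℤ, ‖(if n = 0 then fourierCoeff (⇑Fc) 0 else 0) - fourierCoeff (⇑Fc) n * w n‖ :=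
        norm_tsum_le_tsum_norm hsnorm
    _ ≤ ∑' n : ℤ, u n := Summable.tsum_le_tsum hterm hsnorm hsu.summable
    _ = M * ρ * (1 - ρ)⁻¹ + M * ρ * (1 - ρ)⁻¹ := hsu.tsum_eq
    _ = 2 * M / (Real.exp (2 * Real.pi * N * c) - 1) := hfinal
end

section
/- Let f : [0,∞) → ℝ satisfy f(0) = 0, f real analytic on (0,∞), and f(αx) = α f(x) for all x > 0 for some α ∈ (0,1), with g(x) = α^{-x} f(α^x) such that g and g' are bounded on ℝ. Then f is Lipschitz continuous on [0,∞), with Lipschitz constant at most ‖g‖_∞ + ‖g'‖_∞ / |log α|. -/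
/-- a dilation-invariant real-analytic `f` with `f 0 = 0`, whose associated
periodic function `g` and its derivative are bounded, is Lipschitz on `[0,∞)` with Lipschitz
constant at most `‖g‖_∞ + ‖g'‖_∞/|log α|`. -/
theorem stmt_11 (f g : ℝ → ℝ) (α : ℝ) (hα : α ∈ Set.Ioo (0:ℝ) 1)
    (hf0 : f 0 = 0)
    (hfa : AnalyticOnNhd ℝ f (Set.Ioi 0))
    (hdil : ∀ x > (0:ℝ), f (α * x) = α * f x)
    (hg : ∀ x : ℝ, g x = α ^ (-x) * f (α ^ x))
    (Cg Cg' : ℝ) (hCg : ∀ x, |g x| ≤ Cg) (hCg' : ∀ x, |deriv g x| ≤ Cg') :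
    LipschitzOnWith (Real.toNNReal (Cg + Cg' / |Real.log α|)) f (Set.Ici 0) := by
  obtain ⟨hα0, hα1⟩ := hα
  have hlogα : Real.log α < 0 := Real.log_neg hα0 hα1
  have hlogne : Real.log α ≠ 0 := ne_of_lt hlogα
  have habs : (0:ℝ) < |Real.log α| := abs_pos.2 hlogne
  have hCg0 : 0 ≤ Cg := le_trans (abs_nonneg _) (hCg 0)
  have hCg'0 : 0 ≤ Cg' := le_trans (abs_nonneg _) (hCg' 0)
  set K := Cg + Cg' / |Real.log α| with hKdef
  have hK0 : 0 ≤ K := by positivity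
  have hCgK : Cg ≤ K := by
    rw [hKdef]
    have : 0 ≤ Cg' / |Real.log α| := by positivity
    linarith
  -- f y = y * g (log y / log α) for y > 0
  have hfy : ∀ y : ℝ, 0 < y → f y = y * g (Real.log y / Real.log α) := by
    intro y hy
    have h1 : α ^ (Real.log y / Real.log α) = y := by
      rw [Real.rpow_def_of_pos hα0]
      rw [mul_comm, div_mul_cancel₀ _ hlogne, Real.exp_log hy]
    have h2 := hg (Real.log y / Real.log α)
    rw [h1, Real.rpow_neg hα0.le, h1] at h2
    rw [h2]
    field_simp
  -- g is differentiable
  have hgeq : g = fun x => Real.exp (Real.log α * (-x)) * f (Real.exp (Real.log α * x)) := by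
    funext x
    rw [hg x, Real.rpow_def_of_pos hα0, Real.rpow_def_of_pos hα0]
  have hgdiff : Differentiable ℝ g := by
    rw [hgeq]
    intro x
    have h1 : DifferentiableAt ℝ (fun x : ℝ => Real.exp (Real.log α * x)) x :=
      (Real.differentiable_exp.differentiableAt).comp x
        ((differentiable_id.const_mul _).differentiableAt)
    have h2 : DifferentiableAt ℝ (fun x : ℝ => Real.exp (Real.log α * (-x))) x :=
      (Real.differentiable_exp.differentiableAt).comp x
        (((differentiable_id.neg).const_mul _).differentiableAt)
    have h3 : DifferentiableAt ℝ f (Real.exp (Real.log α * x)) :=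
      (hfa _ (Set.mem_Ioi.2 (Real.exp_pos _))).differentiableAt
    exact h2.mul (h3.comp x h1)
  -- derivative of f at y > 0
  have hderiv : ∀ y : ℝ, 0 < y →
      HasDerivAt f (g (Real.log y / Real.log α)
        + deriv g (Real.log y / Real.log α) / Real.log α) y := by
    intro y hy
    set t := Real.log y / Real.log α with ht
    have hlog : HasDerivAt (fun y : ℝ => Real.log y / Real.log α)
        (y⁻¹ / Real.log α) y := (Real.hasDerivAt_log hy.ne').div_const _
    have hcomp : HasDerivAt (fun y : ℝ => g (Real.log y / Real.log α))
        (deriv g t * (y⁻¹ / Real.log α)) y :=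
      ((hgdiff t).hasDerivAt).comp y hlog
    have hmul : HasDerivAt (fun y : ℝ => y * g (Real.log y / Real.log α))
        (1 * g t + y * (deriv g t * (y⁻¹ / Real.log α))) y :=
      (hasDerivAt_id y).mul hcomp
    have heq : (fun y : ℝ => y * g (Real.log y / Real.log α)) =ᶠ[nhds y] f := by
      filter_upwards [isOpen_Ioi.mem_nhds (Set.mem_Ioi.2 hy)] with z hz
      exact (hfy z hz).symm
    have := hmul.congr_of_eventuallyEq heq.symm
    refine this.congr_deriv ?_
    rw [show y * (deriv g t * (y⁻¹ / Real.log α)) = deriv g t / Real.log α by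
      rw [mul_left_comm, ← mul_div_assoc, mul_inv_cancel₀ hy.ne', mul_one_div]]
    ring
  -- bound on the derivative
  have hbound : ∀ y : ℝ, 0 < y →
      |g (Real.log y / Real.log α) + deriv g (Real.log y / Real.log α) / Real.log α| ≤ K := by
    intro y hy
    calc |g (Real.log y / Real.log α) + deriv g (Real.log y / Real.log α) / Real.log α|
        ≤ |g (Real.log y / Real.log α)| + |deriv g (Real.log y / Real.log α) / Real.log α| :=
          abs_add_le _ _
      _ ≤ Cg + Cg' / |Real.log α| := by
          gcongr
          · exact hCg _
          · rw [abs_div]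
            gcongr
            exact hCg' _
  -- Lipschitz on Ioi 0
  have hlip : ∀ x ∈ Set.Ioi (0:ℝ), ∀ y ∈ Set.Ioi (0:ℝ), |f y - f x| ≤ K * |y - x| := by
    intro x hx y hy
    have := Convex.norm_image_sub_le_of_norm_hasDerivWithin_le
      (f := f) (f' := fun y => g (Real.log y / Real.log α)
        + deriv g (Real.log y / Real.log α) / Real.log α) (s := Set.Ioi 0)
      (fun z hz => (hderiv z hz).hasDerivWithinAt)
      (fun z hz => by simpa using hbound z hz) (convex_Ioi 0) hx hy
    simpa [Real.norm_eq_abs] using this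
  -- assemble
  rw [lipschitzOnWith_iff_dist_le_mul]
  intro x hx y hy
  rw [Real.dist_eq, Real.dist_eq, Real.coe_toNNReal _ hK0]
  rcases eq_or_lt_of_le (Set.mem_Ici.1 hx) with hx0 | hx0
  · rcases eq_or_lt_of_le (Set.mem_Ici.1 hy) with hy0 | hy0
    · simp [← hx0, ← hy0]
    · rw [← hx0, hf0, hfy y hy0]
      rw [zero_sub, abs_neg, zero_sub, abs_neg, abs_mul]
      calc |y| * |g (Real.log y / Real.log α)| ≤ |y| * Cg := by
            gcongr; exact hCg _
        _ ≤ K * |y| := by rw [mul_comm]; gcongr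
  · rcases eq_or_lt_of_le (Set.mem_Ici.1 hy) with hy0 | hy0
    · rw [← hy0, hf0, hfy x hx0]
      rw [sub_zero, sub_zero, abs_mul]
      calc |x| * |g (Real.log x / Real.log α)| ≤ |x| * Cg := by
            gcongr; exact hCg _
        _ ≤ K * |x| := by rw [mul_comm]; gcongr
    · exact hlip y hy0 x hx0
end

section
/- For 0 < α < 1 and integer n ≥ 2, the tail of the series Σ_{j≥2} α^{j/2}/(α - α^j) satisfies Σ_{j=n+1}^∞ α^{j/2}/(α - α^j) ≤ log(tanh((n-1)|log α|/4)) / (α^{1/2} log α). -/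
private lemma my_tanh_pos {x : ℝ} (hx : 0 < x) : 0 < Real.tanh x := by
  rw [Real.tanh_eq_sinh_div_cosh]
  exact div_pos (Real.sinh_pos_iff.mpr hx) (Real.cosh_pos x)

private lemma my_tanh_lt_one (x : ℝ) : Real.tanh x < 1 := by
  rw [Real.tanh_eq_sinh_div_cosh, div_lt_one (Real.cosh_pos x)]
  nlinarith [Real.cosh_sub_sinh x, Real.exp_pos (-x)]

private lemma my_hasDerivAt_log_tanh {x : ℝ} (hx : 0 < x) :
    HasDerivAt (fun y => Real.log (Real.tanh y)) (2 / Real.sinh (2 * x)) x := by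
  have hc : (0:ℝ) < Real.cosh x := Real.cosh_pos x
  have hs : (0:ℝ) < Real.sinh x := Real.sinh_pos_iff.mpr hx
  have htanh : HasDerivAt Real.tanh
      ((Real.cosh x * Real.cosh x - Real.sinh x * Real.sinh x) / Real.cosh x ^ 2) x := by
    have h := (Real.hasDerivAt_sinh x).div (Real.hasDerivAt_cosh x) (ne_of_gt hc)
    have : Real.tanh = fun y => Real.sinh y / Real.cosh y := by
      funext y; rw [Real.tanh_eq_sinh_div_cosh]
    rw [this]
    exact h
  have ht : Real.tanh x ≠ 0 := ne_of_gt (my_tanh_pos hx)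
  have h := htanh.log ht
  convert h using 1
  rw [Real.tanh_eq_sinh_div_cosh, Real.sinh_two_mul]
  have hsq : Real.cosh x ^ 2 - Real.sinh x ^ 2 = 1 := Real.cosh_sq_sub_sinh_sq x
  field_simp
  linear_combination -hsq

private lemma my_log_tanh_gap {u v : ℝ} (hu : 0 < u) (huv : u ≤ v) :
    2 * (v - u) / Real.sinh (2 * v) ≤ Real.log (Real.tanh v) - Real.log (Real.tanh u) := by
  have hv : 0 < v := lt_of_lt_of_le hu huv
  have hsv : 0 < Real.sinh (2 * v) := Real.sinh_pos_iff.mpr (by linarith)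
  set c : ℝ := 2 / Real.sinh (2 * v) with hc
  have hder : ∀ x : ℝ, 0 < x →
      HasDerivAt (fun y => Real.log (Real.tanh y) - c * y) (2 / Real.sinh (2 * x) - c) x := by
    intro x hx
    have h := (my_hasDerivAt_log_tanh hx).sub ((hasDerivAt_id' x).const_mul c)
    rw [mul_one] at h
    exact h
  have hmono : MonotoneOn (fun y => Real.log (Real.tanh y) - c * y) (Set.Icc u v) := by
    apply monotoneOn_of_deriv_nonneg (convex_Icc u v)
    · intro x hx
      exact (hder x (lt_of_lt_of_le hu hx.1)).continuousAt.continuousWithinAt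
    · intro x hx
      rw [interior_Icc] at hx
      exact (hder x (lt_trans hu hx.1)).differentiableAt.differentiableWithinAt
    · intro x hx
      rw [interior_Icc] at hx
      have hx0 : 0 < x := lt_trans hu hx.1
      rw [(hder x hx0).deriv]
      have hsx : 0 < Real.sinh (2 * x) := Real.sinh_pos_iff.mpr (by linarith)
      have hle : Real.sinh (2 * x) ≤ Real.sinh (2 * v) :=
        Real.sinh_le_sinh.mpr (by linarith [hx.2])
      rw [hc, sub_nonneg]
      exact div_le_div_of_nonneg_left (by norm_num) hsx hle
  have h := hmono (Set.left_mem_Icc.mpr huv) (Set.right_mem_Icc.mpr huv) huv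
  simp only [] at h
  have hexp : c * (v - u) = 2 * (v - u) / Real.sinh (2 * v) := by rw [hc]; ring
  linarith [h, hexp.symm.le, hexp.le]

private lemma my_F_eq (L t : ℝ) :
    Real.exp (-(L * (t / 2))) * (Real.exp (-(L * (1 / 2))) * (2 * Real.sinh (L * (t - 1) / 2)))
      = Real.exp (-L) - Real.exp (-(L * t)) := by
  rw [Real.sinh_eq]
  have e1 : Real.exp (-(L * (t / 2))) * Real.exp (-(L * (1 / 2))) * Real.exp (L * (t - 1) / 2)
      = Real.exp (-L) := by
    rw [← Real.exp_add, ← Real.exp_add]; congr 1; ring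
  have e2 : Real.exp (-(L * (t / 2))) * Real.exp (-(L * (1 / 2))) *
      Real.exp (-(L * (t - 1) / 2)) = Real.exp (-(L * t)) := by
    rw [← Real.exp_add, ← Real.exp_add]; congr 1; ring
  linear_combination e1 - e2

/-- Remark 3.9, tail bound: for `0 < α < 1` and `n ≥ 2`,
`Σ_{j=n+1}^∞ α^{j/2}/(α - α^j) ≤ log(tanh((n-1)|log α|/4)) / (α^{1/2} log α)`. -/
theorem stmt_12 (α : ℝ) (hα : α ∈ Set.Ioo (0:ℝ) 1) (n : ℕ) (hn : 2 ≤ n) :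
    (∑' j : ℕ, α ^ (((n + 1 + j : ℕ) : ℝ) / 2) / (α - α ^ (n + 1 + j)))
      ≤ Real.log (Real.tanh (((n : ℝ) - 1) * |Real.log α| / 4)) /
          (α ^ ((1 : ℝ) / 2) * Real.log α) := by
  obtain ⟨hα0, hα1⟩ := hα
  have hlog : Real.log α < 0 := Real.log_neg hα0 hα1
  obtain ⟨L, hL, hlogα⟩ : ∃ L : ℝ, 0 < L ∧ Real.log α = -L :=
    ⟨-Real.log α, by linarith, by ring⟩
  have habs : |Real.log α| = L := by rw [hlogα, abs_neg, abs_of_pos hL]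
  have hs : 0 < α ^ ((1 : ℝ) / 2) := Real.rpow_pos_of_pos hα0 _
  set s : ℝ := α ^ ((1 : ℝ) / 2) with hsdef
  have hsL : 0 < s * L := mul_pos hs hL
  have hexp : ∀ x : ℝ, α ^ x = Real.exp (-(L * x)) := by
    intro x
    rw [Real.rpow_def_of_pos hα0, hlogα]
    ring_nf
  -- auxiliary function G
  set G : ℕ → ℝ := fun m => -Real.log (Real.tanh (((m : ℝ) - 1) * L / 4)) / (s * L)
    with hGdef
  have hG_nonneg : ∀ m : ℕ, 2 ≤ m → 0 ≤ G m := by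
    intro m hm
    have harg : 0 < ((m : ℝ) - 1) * L / 4 := by
      have : (2 : ℝ) ≤ (m : ℝ) := by exact_mod_cast hm
      have h1 : (1 : ℝ) ≤ (m : ℝ) - 1 := by linarith
      positivity
    have hlt : Real.log (Real.tanh (((m : ℝ) - 1) * L / 4)) < 0 :=
      Real.log_neg (my_tanh_pos harg) (my_tanh_lt_one _)
    simp only [hGdef]
    exact div_nonneg (by linarith) hsL.le
  -- rewrite the RHS as G n
  have hRHS : Real.log (Real.tanh (((n : ℝ) - 1) * |Real.log α| / 4)) /
      (s * Real.log α) = G n := by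
    simp only [hGdef, habs, hlogα, abs_neg, abs_of_pos hL, mul_neg, div_neg, neg_div]
  rw [hRHS]
  -- pointwise bound: each term is at most a telescoping difference of G
  have pw : ∀ j : ℕ,
      α ^ (((n + 1 + j : ℕ) : ℝ) / 2) / (α - α ^ (n + 1 + j)) ≤ G (n + j) - G (n + 1 + j) := by
    intro j
    set u : ℝ := (((n + j : ℕ) : ℝ) - 1) * L / 4 with hudef
    set v : ℝ := (((n + 1 + j : ℕ) : ℝ) - 1) * L / 4 with hvdef
    have hcast1 : ((n + j : ℕ) : ℝ) = (n : ℝ) + j := by push_cast; ring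
    have hcast2 : ((n + 1 + j : ℕ) : ℝ) = (n : ℝ) + 1 + j := by push_cast; ring
    have hn2 : (2 : ℝ) ≤ (n : ℝ) := by exact_mod_cast hn
    have hj0 : (0 : ℝ) ≤ (j : ℝ) := Nat.cast_nonneg j
    have hu : 0 < u := by
      rw [hudef, hcast1]
      have : (1 : ℝ) ≤ (n : ℝ) + j - 1 := by linarith
      positivity
    have huv : u ≤ v := by
      rw [hudef, hvdef, hcast1, hcast2]
      have h1 : (n : ℝ) + j - 1 ≤ (n : ℝ) + 1 + j - 1 := by linarith
      have := mul_le_mul_of_nonneg_right h1 hL.le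
      linarith
    have hvu : v - u = L / 4 := by rw [hudef, hvdef, hcast1, hcast2]; ring
    have hv : 0 < v := lt_of_lt_of_le hu huv
    have hsv : 0 < Real.sinh (2 * v) := Real.sinh_pos_iff.mpr (by linarith)
    -- denominator positivity
    have hpowlt : α ^ (n + 1 + j) < α := by
      have h1 : α ^ (n + 1 + j) < α ^ 1 :=
        pow_lt_pow_right_of_lt_one₀ hα0 hα1 (by omega)
      simpa using h1
    have hden : 0 < α - α ^ (n + 1 + j) := by linarith
    -- the term equals 1 / (s * (2 * sinh (2v)))
    have hFeq : α ^ (((n + 1 + j : ℕ) : ℝ) / 2) / (α - α ^ (n + 1 + j))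
        = 1 / (s * (2 * Real.sinh (2 * v))) := by
      rw [div_eq_div_iff hden.ne' (by positivity : (0:ℝ) < s * (2 * Real.sinh (2 * v))).ne']
      have h2v : 2 * v = L * (((n + 1 + j : ℕ) : ℝ) - 1) / 2 := by rw [hvdef]; ring
      have hpow : α ^ (n + 1 + j) = Real.exp (-(L * ((n + 1 + j : ℕ) : ℝ))) := by
        rw [← Real.rpow_natCast α (n + 1 + j), hexp]
      have hαe : α = Real.exp (-L) := by
        have := Real.exp_log hα0
        rw [hlogα] at this
        exact this.symm
      rw [h2v, hexp, hsdef, hexp, hpow, one_mul, hαe]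
      exact my_F_eq L ((n + 1 + j : ℕ) : ℝ)
    rw [hFeq]
    -- the gap
    have hgap := my_log_tanh_gap hu huv
    have hGdiff : G (n + j) - G (n + 1 + j)
        = (Real.log (Real.tanh v) - Real.log (Real.tanh u)) / (s * L) := by
      simp only [hGdef, ← hudef, ← hvdef]
      ring
    rw [hGdiff]
    rw [div_le_div_iff₀ (by positivity) hsL]
    have h2 : 2 * (v - u) ≤ (Real.log (Real.tanh v) - Real.log (Real.tanh u))
        * Real.sinh (2 * v) := by
      rw [div_le_iff₀ hsv] at hgap
      linarith
    rw [hvu] at h2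
    nlinarith [mul_le_mul_of_nonneg_left h2 hs.le, hsv, hs]
  -- nonnegativity of terms
  have hnonneg : ∀ j : ℕ, 0 ≤ α ^ (((n + 1 + j : ℕ) : ℝ) / 2) / (α - α ^ (n + 1 + j)) := by
    intro j
    have hpowlt : α ^ (n + 1 + j) < α := by
      have h1 : α ^ (n + 1 + j) < α ^ 1 :=
        pow_lt_pow_right_of_lt_one₀ hα0 hα1 (by omega)
      simpa using h1
    have hden : 0 < α - α ^ (n + 1 + j) := by linarith
    exact div_nonneg (Real.rpow_pos_of_pos hα0 _).le hden.le
  -- conclude via partial sums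
  apply Real.tsum_le_of_sum_range_le hnonneg
  intro N
  have htel : ∑ i ∈ Finset.range N, (G (n + i) - G (n + 1 + i)) = G n - G (n + N) := by
    have h := Finset.sum_range_sub' (fun i => G (n + i)) N
    simp only [Nat.add_zero] at h
    rw [← h]
    apply Finset.sum_congr rfl
    intro i _
    rw [show n + 1 + i = n + (i + 1) by omega]
  calc ∑ i ∈ Finset.range N, α ^ (((n + 1 + i : ℕ) : ℝ) / 2) / (α - α ^ (n + 1 + i))
      ≤ ∑ i ∈ Finset.range N, (G (n + i) - G (n + 1 + i)) :=
        Finset.sum_le_sum fun i _ => pw i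
    _ = G n - G (n + N) := htel
    _ ≤ G n := by
        have := hG_nonneg (n + N) (by omega)
        linarith
end

section
/- Let Y be a Banach space, Ŝ ∈ L(Y), ρ₀ > 0 with spectral radius ρ(Ŝ) < ρ₀. Define μ₁ = ρ₀ and recursively ν_ℓ = ‖(Ŝ - μ_ℓ I)⁻¹‖⁻¹, μ_{ℓ+1} = μ_ℓ e^{i ν_ℓ/(2ρ₀)}. Let n* be the smallest integer with Σ_{ℓ=1}^{n*} ν_ℓ ≥ 4πρ₀. Then for every λ with |λ| = ρ₀ there exists μ ∈ {μ₁,…,μ_{n*+1}} such that ‖(Ŝ - λI)⁻¹‖⁻¹ ≥ ‖(Ŝ - μI)⁻¹‖⁻¹ - |λ - μ| ≥ min_{ℓ=1,…,n*} (ν_ℓ/4 + ν_{ℓ+1}/2). -/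
lemma aux_chord (t : ℝ) : ‖Complex.exp (t * Complex.I) - 1‖ ≤ |t| := by
  have h1 : Complex.exp (t * Complex.I) - 1
      = Complex.ofReal (Real.cos t - 1) + Complex.ofReal (Real.sin t) * Complex.I := by
    rw [Complex.exp_mul_I]; push_cast; ring
  have h2 : ‖Complex.exp (t * Complex.I) - 1‖ ^ 2
      = (Real.cos t - 1) ^ 2 + (Real.sin t) ^ 2 := by
    rw [h1, Complex.sq_norm, Complex.normSq_add_mul_I]
  have h3 : (Real.cos t - 1) ^ 2 + (Real.sin t) ^ 2 ≤ t ^ 2 := by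
    have hc := Real.one_sub_sq_div_two_le_cos (x := t)
    have hs := Real.sin_sq_add_cos_sq t
    nlinarith [Real.cos_le_one t]
  by_contra h
  push_neg at h
  nlinarith [norm_nonneg (Complex.exp (t * Complex.I) - 1), abs_nonneg t, _root_.sq_abs t]

lemma aux_lip {Y : Type*} [NormedAddCommGroup Y] [NormedSpace ℂ Y]
    (A B : Y →L[ℂ] Y) (hA : IsUnit A) (hB : IsUnit B) :
    ‖Ring.inverse A‖⁻¹ - ‖A - B‖ ≤ ‖Ring.inverse B‖⁻¹ := by
  set RA := Ring.inverse A with hRA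
  set RB := Ring.inverse B with hRB
  rcases le_or_gt (‖RA‖⁻¹ - ‖A - B‖) 0 with h0 | h0
  · exact h0.trans (inv_nonneg.mpr (norm_nonneg _))
  set c := ‖RA‖⁻¹ - ‖A - B‖ with hc
  have hRAA : RA * A = 1 := Ring.inverse_mul_cancel A hA
  have hBRB : B * RB = 1 := Ring.mul_inverse_cancel B hB
  have hpt : ∀ x : Y, c * ‖x‖ ≤ ‖B x‖ := by
    intro x
    have h1 : ‖RA‖⁻¹ * ‖x‖ ≤ ‖A x‖ := by
      rcases eq_or_lt_of_le (norm_nonneg RA) with hz | hz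
      · rw [← hz]; simp [norm_nonneg]
      · have hx : ‖x‖ ≤ ‖RA‖ * ‖A x‖ := by
          have hid : RA (A x) = x := by
            have := congrArg (fun f : Y →L[ℂ] Y => f x) hRAA
            simpa using this
          calc ‖x‖ = ‖RA (A x)‖ := by rw [hid]
            _ ≤ ‖RA‖ * ‖A x‖ := RA.le_opNorm _
        rw [inv_mul_le_iff₀ hz]; exact hx
    have h2 : ‖A x - B x‖ ≤ ‖A - B‖ * ‖x‖ := by
      have := (A - B).le_opNorm x
      simpa using this
    have h3 : ‖A x‖ - ‖B x‖ ≤ ‖A x - B x‖ := norm_sub_norm_le (A x) (B x)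
    have h4 : c * ‖x‖ = ‖RA‖⁻¹ * ‖x‖ - ‖A - B‖ * ‖x‖ := by rw [hc]; ring
    rw [h4]; linarith
  have hRBle : ‖RB‖ ≤ c⁻¹ := by
    refine ContinuousLinearMap.opNorm_le_bound _ (by positivity) fun y => ?_
    have hb : B (RB y) = y := by
      have := congrArg (fun f : Y →L[ℂ] Y => f y) hBRB
      simpa using this
    have hy := hpt (RB y)
    rw [hb] at hy
    rw [← mul_le_mul_iff_right₀ h0, ← mul_assoc, mul_inv_cancel₀ (ne_of_gt h0), one_mul]
    exact hy
  rcases eq_or_lt_of_le (norm_nonneg RB) with hz | hz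
  · exfalso
    have hRB0 : RB = 0 := norm_eq_zero.mp hz.symm
    have h10 : (1 : Y →L[ℂ] Y) = 0 := by rw [← hBRB, hRB0, mul_zero]
    have hRA0 : RA = 0 := by
      calc RA = RA * 1 := (mul_one _).symm
        _ = RA * 0 := by rw [h10]
        _ = 0 := mul_zero _
    rw [hc, hRA0] at h0
    simp at h0
    linarith [norm_nonneg (A - B), h0]
  · calc c = (c⁻¹)⁻¹ := (inv_inv c).symm
      _ ≤ ‖RB‖⁻¹ := by
        apply inv_anti₀ hz hRBle

/-- Lemma 3.4, adaptive covering of the circle: with the adaptively chosen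
points `μ_ℓ` on the circle of radius `ρ₀`, every `λ` on the circle is controlled by one of the
`μ_ℓ`, with the lower resolvent norms bounded below by `R* = min (ν_ℓ/4 + ν_{ℓ+1}/2)`. -/
theorem stmt_19 {Y : Type*} [NormedAddCommGroup Y] [NormedSpace ℂ Y] [CompleteSpace Y]
    (Shat : Y →L[ℂ] Y) (ρ₀ : ℝ) (hρ : 0 < ρ₀)
    (hS : spectralRadius ℂ Shat < ENNReal.ofReal ρ₀)
    (μ : ℕ → ℂ) (ν : ℕ → ℝ)
    (hμ1 : μ 1 = (ρ₀ : ℂ))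
    (hν : ∀ l, 1 ≤ l → ν l = ‖Ring.inverse (Shat - μ l • (1 : Y →L[ℂ] Y))‖⁻¹)
    (hμrec : ∀ l, 1 ≤ l → μ (l + 1) = μ l * Complex.exp (Complex.I * (ν l / (2 * ρ₀))))
    (nstar : ℕ) (h1n : 1 ≤ nstar)
    (hsum : 4 * Real.pi * ρ₀ ≤ ∑ l ∈ Finset.Icc 1 nstar, ν l)
    (hmin : ∀ m : ℕ, m < nstar → ∑ l ∈ Finset.Icc 1 m, ν l < 4 * Real.pi * ρ₀) :
    ∀ lam : ℂ, ‖lam‖ = ρ₀ → ∃ l ∈ Finset.Icc 1 (nstar + 1),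
      Finset.inf' (Finset.Icc 1 nstar) (Finset.nonempty_Icc.mpr h1n)
          (fun i => ν i / 4 + ν (i + 1) / 2)
        ≤ ‖Ring.inverse (Shat - μ l • (1 : Y →L[ℂ] Y))‖⁻¹ - ‖lam - μ l‖ ∧
      ‖Ring.inverse (Shat - μ l • (1 : Y →L[ℂ] Y))‖⁻¹ - ‖lam - μ l‖
        ≤ ‖Ring.inverse (Shat - lam • (1 : Y →L[ℂ] Y))‖⁻¹ := by
  intro lam hlam
  have hπ := Real.pi_pos
  have hν0 : ∀ l, 1 ≤ l → 0 ≤ ν l := fun l hl => by rw [hν l hl]; positivity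
  -- angles
  set θ : ℕ → ℝ := fun l => (∑ j ∈ Finset.Icc 1 (l - 1), ν j) / (2 * ρ₀) with hθdef
  have hθ1 : θ 1 = 0 := by simp [hθdef]
  have hθrec : ∀ l, 1 ≤ l → θ (l + 1) = θ l + ν l / (2 * ρ₀) := by
    intro l hl
    match l, hl with
    | (k+1), _ =>
      have hsum' : ∑ j ∈ Finset.Icc 1 (k + 1), ν j
          = (∑ j ∈ Finset.Icc 1 k, ν j) + ν (k + 1) :=
        Finset.sum_Icc_succ_top (Nat.le_add_left 1 k) ν
      simp only [hθdef, Nat.add_sub_cancel]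
      rw [hsum', add_div]
  -- μ formula
  have hμform : ∀ l, 1 ≤ l → μ l = (ρ₀ : ℂ) * Complex.exp (θ l * Complex.I) := by
    intro l hl
    induction l with
    | zero => omega
    | succ k ih =>
      rcases Nat.lt_or_ge 1 (k + 1) with hk | hk
      · have hk1 : 1 ≤ k := by omega
        rw [hμrec k hk1, ih hk1, hθrec k hk1, mul_assoc, ← Complex.exp_add]
        congr 1
        push_cast
        ring
      · have : k = 0 := by omega
        subst this
        rw [hμ1, hθ1]
        simp
  have hμabs : ∀ l, 1 ≤ l → ‖μ l‖ = ρ₀ := by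
    intro l hl
    rw [hμform l hl, norm_mul, Complex.norm_real,
      Real.norm_eq_abs, Complex.norm_exp_ofReal_mul_I, mul_one, abs_of_pos hρ]
  -- units
  have hunit : ∀ z : ℂ, ‖z‖ = ρ₀ → IsUnit (Shat - z • (1 : Y →L[ℂ] Y)) := by
    intro z hz
    have h1 : spectralRadius ℂ Shat < (‖z‖₊ : ENNReal) := by
      rw [← ENNReal.ofReal_coe_nnreal, coe_nnnorm, hz]; exact hS
    have h2 : z ∈ resolventSet ℂ Shat :=
      spectrum.mem_resolventSet_of_spectralRadius_lt h1
    have h3 : IsUnit (algebraMap ℂ (Y →L[ℂ] Y) z - Shat) := h2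
    have h4 : Shat - z • (1 : Y →L[ℂ] Y) = -(algebraMap ℂ (Y →L[ℂ] Y) z - Shat) := by
      rw [Algebra.algebraMap_eq_smul_one, neg_sub]
    rw [h4]
    exact h3.neg
  -- φ
  set φ : ℝ := if 0 ≤ lam.arg then lam.arg else lam.arg + 2 * Real.pi with hφdef
  have harg1 := Complex.arg_le_pi lam
  have harg2 := Complex.neg_pi_lt_arg lam
  have hφ0 : 0 ≤ φ := by
    rw [hφdef]; split_ifs with h
    · exact h
    · linarith
  have hφ2 : φ ≤ 2 * Real.pi := by
    rw [hφdef]; split_ifs with h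
    · linarith
    · push_neg at h; linarith
  have hlamform : lam = (ρ₀ : ℂ) * Complex.exp (φ * Complex.I) := by
    have h := Complex.norm_mul_exp_arg_mul_I lam
    have habsr : ‖lam‖ = ρ₀ := by exact hlam
    have habs : ((‖lam‖ : ℝ) : ℂ) = (ρ₀ : ℂ) := by exact_mod_cast habsr
    rw [hφdef]
    split_ifs with hc
    · rw [← habs]; exact h.symm
    · have h2 : Complex.exp (((lam.arg + 2 * Real.pi : ℝ) : ℂ) * Complex.I)
          = Complex.exp (lam.arg * Complex.I) := by
        push_cast
        rw [add_mul, Complex.exp_add, Complex.exp_two_pi_mul_I, mul_one]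
      rw [h2, ← habs]; exact h.symm
  -- choose l
  set T := (Finset.Icc 1 nstar).filter (fun m => θ m ≤ φ) with hT
  have hTne : T.Nonempty := by
    refine ⟨1, Finset.mem_filter.mpr ⟨Finset.mem_Icc.mpr ⟨le_refl 1, h1n⟩, ?_⟩⟩
    rw [hθ1]; exact hφ0
  set l := T.max' hTne with hldef
  have hlmem := T.max'_mem hTne
  have hl1 : 1 ≤ l := (Finset.mem_Icc.mp (Finset.mem_filter.mp hlmem).1).1
  have hln : l ≤ nstar := (Finset.mem_Icc.mp (Finset.mem_filter.mp hlmem).1).2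
  have hθl : θ l ≤ φ := (Finset.mem_filter.mp hlmem).2
  have hφθ : φ ≤ θ (l + 1) := by
    rcases eq_or_lt_of_le hln with heq | hlt
    · have h2π : 2 * Real.pi ≤ θ (nstar + 1) := by
        have : θ (nstar + 1) = (∑ j ∈ Finset.Icc 1 nstar, ν j) / (2 * ρ₀) := by
          simp [hθdef]
        rw [this, le_div_iff₀ (by positivity)]
        nlinarith
      rw [heq]; exact hφ2.trans h2π
    · by_contra hcon
      push_neg at hcon
      have hmem : l + 1 ∈ T := Finset.mem_filter.mpr
        ⟨Finset.mem_Icc.mpr ⟨by omega, hlt⟩, le_of_lt hcon⟩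
      have := T.le_max' _ hmem
      omega
  -- chord bounds
  have hchord : ∀ α β : ℝ, ‖(ρ₀ : ℂ) * Complex.exp (α * Complex.I)
      - (ρ₀ : ℂ) * Complex.exp (β * Complex.I)‖ ≤ ρ₀ * |α - β| := by
    intro α β
    have hfac : (ρ₀ : ℂ) * Complex.exp (α * Complex.I) - (ρ₀ : ℂ) * Complex.exp (β * Complex.I)
        = (ρ₀ : ℂ) * (Complex.exp (β * Complex.I) * (Complex.exp (((α - β : ℝ) : ℂ) * Complex.I) - 1)) := by
      rw [mul_sub, mul_one, ← Complex.exp_add]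
      push_cast
      ring_nf
    rw [hfac, norm_mul, norm_mul]
    have h1 : ‖((ρ₀ : ℝ) : ℂ)‖ = ρ₀ := by
      rw [Complex.norm_real, Real.norm_eq_abs, abs_of_pos hρ]
    have h2 : ‖Complex.exp (β * Complex.I)‖ = 1 := by
      rw [Complex.norm_exp_ofReal_mul_I]
    rw [h1, h2, one_mul]
    exact mul_le_mul_of_nonneg_left (aux_chord (α - β)) (le_of_lt hρ)
  have hdl : ‖lam - μ l‖ ≤ ρ₀ * (φ - θ l) := by
    rw [hlamform, hμform l hl1]
    have h := hchord φ (θ l)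
    rwa [_root_.abs_of_nonneg (by linarith : (0:ℝ) ≤ φ - θ l)] at h
  have hdl1 : ‖lam - μ (l + 1)‖ ≤ ρ₀ * (θ (l + 1) - φ) := by
    rw [hlamform, hμform (l + 1) (by omega)]
    have h := hchord φ (θ (l + 1))
    rwa [_root_.abs_of_nonpos (by linarith : φ - θ (l+1) ≤ (0:ℝ)), neg_sub] at h
  -- the sum identity
  have hab : ρ₀ * (φ - θ l) + ρ₀ * (θ (l + 1) - φ) = ν l / 2 := by
    rw [hθrec l hl1]
    field_simp
    ring
  -- Lipschitz consequence
  have hAmB : ∀ m, 1 ≤ m →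
      ‖Ring.inverse (Shat - μ m • (1 : Y →L[ℂ] Y))‖⁻¹ - ‖lam - μ m‖
        ≤ ‖Ring.inverse (Shat - lam • (1 : Y →L[ℂ] Y))‖⁻¹ := by
    intro m hm
    have h1 := aux_lip (Shat - μ m • (1 : Y →L[ℂ] Y)) (Shat - lam • (1 : Y →L[ℂ] Y))
      (hunit _ (hμabs m hm)) (hunit _ hlam)
    have hdiff : (Shat - μ m • (1 : Y →L[ℂ] Y)) - (Shat - lam • (1 : Y →L[ℂ] Y))
        = (lam - μ m) • (1 : Y →L[ℂ] Y) := by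
      rw [sub_smul]
      abel
    have hnd : ‖(Shat - μ m • (1 : Y →L[ℂ] Y)) - (Shat - lam • (1 : Y →L[ℂ] Y))‖
        ≤ ‖lam - μ m‖ := by
      rw [hdiff]
      have h5 := norm_smul_le (lam - μ m) (1 : Y →L[ℂ] Y)
      have h6 : ‖(1 : Y →L[ℂ] Y)‖ ≤ 1 := ContinuousLinearMap.norm_id_le
      nlinarith [norm_nonneg (lam - μ m)]
    linarith
  -- target
  have hinfR : Finset.inf' (Finset.Icc 1 nstar) (Finset.nonempty_Icc.mpr h1n)
      (fun i => ν i / 4 + ν (i + 1) / 2) ≤ ν l / 4 + ν (l + 1) / 2 :=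
    Finset.inf'_le _ (Finset.mem_Icc.mpr ⟨hl1, hln⟩)
  by_cases hcase : ν l / 4 + ν (l + 1) / 2 ≤ ν l - ρ₀ * (φ - θ l)
  · refine ⟨l, Finset.mem_Icc.mpr ⟨hl1, by omega⟩, ?_, hAmB l hl1⟩
    rw [← hν l hl1]
    have : ν l / 4 + ν (l + 1) / 2 ≤ ν l - ‖lam - μ l‖ := by linarith
    linarith
  · push_neg at hcase
    refine ⟨l + 1, Finset.mem_Icc.mpr ⟨by omega, by omega⟩, ?_, hAmB (l + 1) (by omega)⟩
    rw [← hν (l + 1) (by omega)]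
    have : ν l / 4 + ν (l + 1) / 2 ≤ ν (l + 1) - ‖lam - μ (l + 1)‖ := by linarith
    linarith
end
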